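/- arXiv:1605.02228 — 10 statements merged into one kernel-verified Lean document; each statement's English description precedes it below -/
import Mathlib

section
/- If N is a normal subgroup of a finite group G not contained in Φ(G), and U is minimal among subgroups of G with NU = G, then N ∩ U = N ∩ Φ(U). -/
open Subgroup

/-- A subgroup `H` of `G` is subnormal if there is a chain of subgroups from `H` to `G`,
each normal in the next. -/
def IsSubnormal {G : Type*} [Group G] (H : Subgroup G) : Prop :=
  ∃ (n : ℕ) (c : ℕ → Subgroup G), c 0 = H ∧ c n = ⊤ ∧
    ∀ i, c i ≤ c (i + 1) ∧ ((c i).subgroupOf (c (i + 1))).Normal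

/-- A group is quasi-simple if it is perfect and its central quotient is simple. -/
def IsQuasiSimple (Q : Type*) [Group Q] : Prop :=
  commutator Q = ⊤ ∧ IsSimpleGroup (Q ⧸ Subgroup.center Q)

/-- A component of `G` is a subnormal quasi-simple subgroup. -/
def IsComponent {G : Type*} [Group G] (Q : Subgroup G) : Prop :=
  _root_.IsSubnormal Q ∧ IsQuasiSimple Q

/-- The layer `E(G)`: the subgroup generated by all components of `G`. -/
def layer (G : Type*) [Group G] : Subgroup G :=
  Subgroup.closure {x | ∃ Q : Subgroup G, IsComponent Q ∧ x ∈ Q}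

/-- The Fitting subgroup `F(G)`: the subgroup generated by all nilpotent normal
subgroups of `G`. -/
def fitting (G : Type*) [Group G] : Subgroup G :=
  Subgroup.normalClosure {x | ∃ N : Subgroup G, N.Normal ∧ Group.IsNilpotent N ∧ x ∈ N}

/-- The generalised Fitting subgroup `F*(G) = F(G) E(G)`. -/
def genFitting (G : Type*) [Group G] : Subgroup G := fitting G ⊔ layer G

/-- `N` is a minimal normal subgroup of `G`. -/
def IsMinimalNormal {G : Type*} [Group G] (N : Subgroup G) : Prop :=
  N.Normal ∧ N ≠ ⊥ ∧ ∀ M : Subgroup G, M.Normal → M ≤ N → M ≠ ⊥ → M = N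

/-- The socle of `G`: the subgroup generated by all minimal normal subgroups of `G`. -/
def socle (G : Type*) [Group G] : Subgroup G :=
  Subgroup.closure {x | ∃ N : Subgroup G, IsMinimalNormal N ∧ x ∈ N}

/-- `Soc(Z(G))`, viewed as a subgroup of `G`. -/
def centerSocle (G : Type*) [Group G] : Subgroup G :=
  (socle (Subgroup.center G)).map (Subgroup.center G).subtype

/-- The class `B` of groups all of whose quotients have trivial Frattini subgroup. -/
def classB (G : Type*) [Group G] : Prop :=
  ∀ (N : Subgroup G) [N.Normal], frattini (G ⧸ N) = ⊥

/-- If `N ⊴ G` is not contained in `Φ(G)` and `U` is minimal among supplements of `N`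
in `G`, then `N ∩ U = N ∩ Φ(U)`. -/
theorem stmt_1 (G : Type*) [Group G] [Finite G] (N U : Subgroup G) (hN : N.Normal)
    (hNF : ¬ N ≤ frattini G) (hU : N ⊔ U = ⊤)
    (hmin : ∀ V : Subgroup G, V ≤ U → N ⊔ V = ⊤ → V = U) :
    N ⊓ U = N ⊓ (frattini U).map U.subtype := by
  refine le_antisymm ?_ (inf_le_inf_left _ (map_subtype_le _))
  refine le_inf inf_le_left ?_
  have key : (N ⊓ U).subgroupOf U ≤ frattini U := by
    rw [frattini, Order.radical]
    refine le_iInf fun M => le_iInf fun hM => ?_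
    by_contra hKM
    have htop : (N ⊓ U).subgroupOf U ⊔ M = ⊤ := by
      rw [sup_comm]
      exact hM.2 _ (lt_of_le_of_ne le_sup_left fun h => hKM (le_of_le_of_eq le_sup_right h.symm))
    have hmap : (N ⊓ U) ⊔ M.map U.subtype = U := by
      have := congrArg (Subgroup.map U.subtype) htop
      rw [Subgroup.map_sup, subgroupOf_map_subtype, ← MonoidHom.range_eq_map, range_subtype,
        inf_assoc, inf_idem] at this
      exact this
    have hNM : N ⊔ M.map U.subtype = ⊤ := by
      calc N ⊔ M.map U.subtype = N ⊔ ((N ⊓ U) ⊔ M.map U.subtype) := by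
            rw [← sup_assoc, sup_inf_self]
        _ = ⊤ := by rw [hmap, hU]
    have hMU : M.map U.subtype = U := hmin _ (map_subtype_le _) hNM
    have : M = ⊤ := by
      apply map_injective U.subtype_injective
      rw [hMU, ← MonoidHom.range_eq_map, range_subtype]
    exact hM.1 this
  calc N ⊓ U ≤ ((N ⊓ U).subgroupOf U).map U.subtype := by
        rw [subgroupOf_map_subtype]; exact le_inf le_rfl inf_le_right
    _ ≤ _ := map_mono key
end

section
/- For any finite group G, the Frattini subgroup Φ(G) contains Z(G) ∩ G', the intersection of the center with the derived subgroup. -/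
open Subgroup

open scoped commutatorElement

lemma aux_comm {G : Type*} [Group G] (m z h : G) (hz : z ∈ Subgroup.center G) :
    ⁅m * z, h⁆ = ⁅m, h⁆ := by
  have hzc := Subgroup.mem_center_iff.mp hz
  rw [commutatorElement_def, commutatorElement_def, mul_inv_rev,
    mul_assoc m z h, ← hzc h, ← mul_assoc m h z, mul_assoc (m*h) z (z⁻¹*m⁻¹),
    ← mul_assoc z z⁻¹ m⁻¹, mul_inv_cancel, one_mul]

/-- `Z(G) ∩ G' ≤ Φ(G)` for a finite group `G`. -/
theorem stmt_5 (G : Type*) [Group G] [Finite G] :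
    Subgroup.center G ⊓ commutator G ≤ frattini G := by
  rw [frattini, Order.radical, le_iInf_iff]
  intro M
  rw [le_iInf_iff]
  intro hM
  by_cases hZ : Subgroup.center G ≤ M
  · exact inf_le_left.trans hZ
  · have hsup : M ⊔ Subgroup.center G = ⊤ := by
      refine hM.2 _ (lt_of_le_of_ne le_sup_left ?_)
      intro h
      exact hZ (h ▸ le_sup_right)
    refine inf_le_right.trans ?_
    rw [commutator_def, commutator_le]
    intro g _ h _
    have hg : g ∈ M ⊔ Subgroup.center G := hsup ▸ mem_top g
    have hh : h ∈ M ⊔ Subgroup.center G := hsup ▸ mem_top h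
    rw [← SetLike.mem_coe, mul_normal] at hg hh
    obtain ⟨m, hm, z, hz, rfl⟩ := hg
    obtain ⟨m', hm', z', hz', rfl⟩ := hh
    show ⁅m * z, m' * z'⁆ ∈ M
    rw [aux_comm m z _ hz, ← commutatorElement_inv, aux_comm m' z' m hz',
      commutatorElement_inv, commutatorElement_def]
    exact mul_mem (mul_mem (mul_mem hm hm') (inv_mem hm)) (inv_mem hm')
end

section
/- If A is an abelian normal subgroup of a finite group G with A ∩ Φ(G) = 1, then A is complemented in G (there exists a subgroup C with A ∩ C = 1 and AC = G). -/
open Subgroup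

set_option maxHeartbeats 1000000 in
/-- An abelian normal subgroup meeting `Φ(G)` trivially is complemented. -/
theorem stmt_6 (G : Type*) [Group G] [Finite G] (A : Subgroup G) (hA : A.Normal)
    (hab : IsMulCommutative A) (hmeet : A ⊓ frattini G = ⊥) :
    ∃ C : Subgroup G, A ⊔ C = ⊤ ∧ A ⊓ C = ⊥ := by
  -- Choose `C` minimal with `A ⊔ C = ⊤`.
  obtain ⟨C, hC, hmin⟩ : ∃ C ∈ {C : Subgroup G | A ⊔ C = ⊤},
      ∀ C' ∈ {C : Subgroup G | A ⊔ C = ⊤}, id C' ≤ id C → id C = id C' := by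
    obtain ⟨C, hCm⟩ := (Set.toFinite {C : Subgroup G | A ⊔ C = ⊤}).exists_minimal ⟨⊤, by simp⟩
    exact ⟨C, hCm.prop, fun C' hC' hle => hCm.eq_of_ge hC' hle⟩
  simp only [Set.mem_setOf_eq, id] at hC hmin
  refine ⟨C, hC, ?_⟩
  -- `A ⊓ C` is normal in `G`.
  have hnorm : (A ⊓ C).Normal := by
    constructor
    intro n hn g
    have hg : g ∈ A ⊔ C := by rw [hC]; trivial
    rw [← SetLike.mem_coe, Subgroup.normal_mul] at hg
    obtain ⟨a, ha, c, hc, rfl⟩ := hg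
    simp only [SetLike.mem_coe] at ha hc
    obtain ⟨hnA, hnC⟩ := Subgroup.mem_inf.mp hn
    have h1 : c * n * c⁻¹ ∈ A ⊓ C :=
      Subgroup.mem_inf.mpr ⟨hA.conj_mem n hnA c, mul_mem (mul_mem hc hnC) (inv_mem hc)⟩
    have h2 : a * (c * n * c⁻¹) = (c * n * c⁻¹) * a :=
      mul_comm_of_mem_isMulCommutative A ha (Subgroup.mem_inf.mp h1).1
    have : a * c * n * (a * c)⁻¹ = c * n * c⁻¹ := by
      rw [mul_inv_rev]
      calc a * c * n * (c⁻¹ * a⁻¹) = a * (c * n * c⁻¹) * a⁻¹ := by group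
        _ = (c * n * c⁻¹) * a * a⁻¹ := by rw [h2]
        _ = c * n * c⁻¹ := by group
    rw [this]
    exact h1
  -- Suppose `A ⊓ C ≠ ⊥`; then `A ⊓ C ≰ frattini G`.
  by_contra hne
  have hnotle : ¬ A ⊓ C ≤ frattini G := fun h =>
    hne (le_bot_iff.mp (hmeet ▸ le_inf inf_le_left h))
  -- Find a maximal subgroup `M` not containing `A ⊓ C`.
  obtain ⟨M, hM, hMle⟩ : ∃ M : Subgroup G, IsCoatom M ∧ ¬ A ⊓ C ≤ M := by
    simp only [frattini, Order.radical, le_iInf_iff, not_forall, Set.mem_setOf_eq] at hnotle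
    obtain ⟨M, hM, h⟩ := hnotle
    exact ⟨M, hM, h⟩
  have hsup : (A ⊓ C) ⊔ M = ⊤ := by
    exact hM.2 _ (right_lt_sup.mpr hMle)
  -- Dedekind: `C = (A ⊓ C) ⊔ (C ⊓ M)`.
  have hded : C = (A ⊓ C) ⊔ (C ⊓ M) := by
    refine le_antisymm (fun c hc => ?_) (sup_le inf_le_right inf_le_left)
    have : c ∈ (A ⊓ C) ⊔ M := by rw [hsup]; trivial
    rw [← SetLike.mem_coe, Subgroup.normal_mul] at this
    obtain ⟨n, hn, m, hm, rfl⟩ := this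
    simp only [SetLike.mem_coe] at hn hm
    have hmC : m ∈ C := by
      have : n⁻¹ * (n * m) ∈ C := mul_mem (inv_mem (Subgroup.mem_inf.mp hn).2) hc
      simpa using this
    exact mul_mem (mem_sup_left hn) (mem_sup_right (Subgroup.mem_inf.mpr ⟨hmC, hm⟩))
  -- `A ⊔ (C ⊓ M) = ⊤`, so minimality forces `C ≤ M`, a contradiction.
  have htop : A ⊔ (C ⊓ M) = ⊤ := by
    have : A ⊔ C = A ⊔ (C ⊓ M) := by
      conv_lhs => rw [hded]
      rw [← sup_assoc, sup_inf_self]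
    rw [← this, hC]
  have hCM : C = C ⊓ M := hmin (C ⊓ M) htop inf_le_left
  exact hMle (le_trans inf_le_right (le_trans hCM.le inf_le_right))
end

section
/- If Q is a quasi-simple subnormal subgroup of a finite group G with Φ(G) = 1, then Q is simple (in particular Z(Q) = 1). -/
open Subgroup

open scoped commutatorElement

private lemma commEl_mul_center_right {Q : Type*} [Group Q] {z : Q} (hz : z ∈ Subgroup.center Q)
    (a b : Q) : ⁅a, b * z⁆ = ⁅a, b⁆ := by
  have hc := Subgroup.mem_center_iff.mp hz
  rw [commutatorElement_def, commutatorElement_def]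
  have h1 : z * a⁻¹ * z⁻¹ = a⁻¹ := by rw [← hc a⁻¹]; group
  calc a * (b * z) * a⁻¹ * (b * z)⁻¹ = a * b * (z * a⁻¹ * z⁻¹) * b⁻¹ := by group
    _ = a * b * a⁻¹ * b⁻¹ := by rw [h1]

private lemma commEl_mul_center {Q : Type*} [Group Q] {z : Q} (hz : z ∈ Subgroup.center Q)
    (a b : Q) : ⁅a * z, b⁆ = ⁅a, b⁆ := by
  have hc := Subgroup.mem_center_iff.mp hz
  rw [commutatorElement_def, commutatorElement_def]
  have h1 : z * b * z⁻¹ = b := by rw [← hc b]; group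
  calc a * z * b * (a * z)⁻¹ * b⁻¹ = a * (z * b * z⁻¹) * a⁻¹ * b⁻¹ := by group
    _ = a * b * a⁻¹ * b⁻¹ := by rw [h1]

private lemma center_le_frattini_of_perfect {Q : Type*} [Group Q]
    (hperf : commutator Q = ⊤) : Subgroup.center Q ≤ frattini Q := by
  rw [frattini, Order.radical]
  refine le_iInf fun M => le_iInf fun hM => ?_
  by_contra hle
  have htop : M ⊔ Subgroup.center Q = ⊤ := hM.2 _ (left_lt_sup.mpr hle)
  have hcomm : commutator Q ≤ M := by
    rw [commutator_def, Subgroup.commutator_le]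
    intro g _ h _
    have hg : g ∈ M ⊔ Subgroup.center Q := htop ▸ Subgroup.mem_top g
    have hh : h ∈ M ⊔ Subgroup.center Q := htop ▸ Subgroup.mem_top h
    rw [← SetLike.mem_coe, Subgroup.mul_normal] at hg hh
    obtain ⟨m, hm, z, hzc, rfl⟩ := hg
    obtain ⟨n, hn, w, hwc, rfl⟩ := hh
    rw [commEl_mul_center hzc, commEl_mul_center_right hwc, commutatorElement_def]
    exact M.mul_mem (M.mul_mem (M.mul_mem hm hn) (M.inv_mem hm)) (M.inv_mem hn)
  exact hM.1 (top_le_iff.mp (hperf ▸ hcomm))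

private lemma map_subtype_normal_of_char {K : Type*} [Group K] (H : Subgroup K) [H.Normal]
    (C : Subgroup H) [hC : C.Characteristic] : (C.map H.subtype).Normal := by
  constructor
  intro p hp k
  rw [Subgroup.mem_map] at hp ⊢
  obtain ⟨q, hq, rfl⟩ := hp
  refine ⟨MulAut.conjNormal k q, ?_, ?_⟩
  · have := Subgroup.characteristic_iff_comap_eq.mp hC (MulAut.conjNormal k)⁻¹
    rw [← this, Subgroup.mem_comap]
    simpa using hq
  · simp [MulAut.conjNormal_apply, Subgroup.coe_subtype]

private lemma frattini_map_equiv {A B : Type*} [Group A] [Group B] (e : A ≃* B) :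
    (frattini A).map e.toMonoidHom = frattini B :=
  e.mapSubgroup.map_radical

private lemma frattini_map_subtype_le {K : Type*} [Group K] [Finite K]
    (H : Subgroup K) [hH : H.Normal] : (frattini H).map H.subtype ≤ frattini K := by
  set P := (frattini H).map H.subtype with hP
  have hPnormal : P.Normal := map_subtype_normal_of_char H (frattini H)
  have hPH : P ≤ H := Subgroup.map_subtype_le _
  rw [frattini, Order.radical]
  refine le_iInf fun M => le_iInf fun hM => ?_
  by_contra hle
  have htop : M ⊔ P = ⊤ := hM.2 _ (left_lt_sup.mpr hle)
  -- every element of H is in ((H ⊓ M).subgroupOf H) ⊔ frattini H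
  have key : ((H ⊓ M).subgroupOf H) ⊔ frattini H = ⊤ := by
    rw [eq_top_iff]
    rintro ⟨h, hh⟩ -
    have hmem : h ∈ M ⊔ P := htop ▸ Subgroup.mem_top h
    rw [← SetLike.mem_coe, Subgroup.mul_normal] at hmem
    obtain ⟨m, hm, p, hp, rfl⟩ := hmem
    obtain ⟨q, hq, rfl⟩ := Subgroup.mem_map.mp hp
    have hmH : m ∈ H := by
      have : m = (m * H.subtype q) * (H.subtype q)⁻¹ := by group
      rw [this]
      exact H.mul_mem hh (H.inv_mem (hPH hp))
    have : (⟨m * H.subtype q, hh⟩ : H) = ⟨m, hmH⟩ * q := by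
      ext; simp [Subgroup.coe_subtype]
    rw [this]
    exact Subgroup.mul_mem _
      (Subgroup.mem_sup_left (by rw [Subgroup.mem_subgroupOf]; exact ⟨hmH, hm⟩))
      (Subgroup.mem_sup_right hq)
  have := frattini_nongenerating key
  have h2 : H ≤ H ⊓ M := Subgroup.subgroupOf_eq_top.mp this
  exact hle (le_trans hPH (le_trans h2 inf_le_right))

private lemma F_mono {G : Type*} [Group G] [Finite G] {A B : Subgroup G} (hAB : A ≤ B)
    (hN : (A.subgroupOf B).Normal) :
    (frattini A).map A.subtype ≤ (frattini B).map B.subtype := by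
  have h1 := frattini_map_subtype_le (K := B) (A.subgroupOf B)
  have h2 := Subgroup.map_mono (f := B.subtype) h1
  rw [Subgroup.map_map] at h2
  set e : ↥(A.subgroupOf B) ≃* ↥A := Subgroup.subgroupOfEquivOfLe hAB with he
  have hcomp : B.subtype.comp (A.subgroupOf B).subtype = A.subtype.comp e.toMonoidHom := by
    ext x; rfl
  calc (frattini A).map A.subtype
      = ((frattini (A.subgroupOf B)).map e.toMonoidHom).map A.subtype := by
        rw [frattini_map_equiv]
    _ = (frattini (A.subgroupOf B)).map (A.subtype.comp e.toMonoidHom) :=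
        Subgroup.map_map _ _ _
    _ = (frattini (A.subgroupOf B)).map (B.subtype.comp (A.subgroupOf B).subtype) := by
        rw [hcomp]
    _ ≤ (frattini B).map B.subtype := h2

/-- In a finite group with trivial Frattini subgroup, every subnormal quasi-simple
subgroup is simple; in particular its centre is trivial. -/
theorem stmt_7 (G : Type*) [Group G] [Finite G] (hG : frattini G = ⊥)
    (Q : Subgroup G) (hsub : _root_.IsSubnormal Q) (hqs : IsQuasiSimple Q) :
    IsSimpleGroup Q ∧ Subgroup.center Q = ⊥ := by
  obtain ⟨hperf, hsimp⟩ := hqs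
  obtain ⟨n, c, h0, hn, hc⟩ := hsub
  have key : ∀ i, (frattini Q).map Q.subtype ≤ (frattini (c i)).map (c i).subtype := by
    intro i
    induction i with
    | zero => exact le_of_eq (by rw [h0])
    | succ i ih => exact le_trans ih (F_mono (hc i).1 (hc i).2)
  have htop : (frattini ((⊤ : Subgroup G) : Subgroup G)).map (⊤ : Subgroup G).subtype
      = frattini G := by
    have : (⊤ : Subgroup G).subtype = Subgroup.topEquiv.toMonoidHom := rfl
    rw [this, frattini_map_equiv]
  have hbot : (frattini Q).map Q.subtype ≤ ⊥ := by
    have := key n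
    rw [hn, htop, hG] at this
    exact this
  have hfQ : frattini (Q : Subgroup G) = ⊥ := by
    rw [← le_bot_iff]
    intro x hx
    have : Q.subtype x ∈ (⊥ : Subgroup G) := hbot (Subgroup.mem_map_of_mem _ hx)
    rw [Subgroup.mem_bot] at this ⊢
    exact Subtype.ext (by simpa using this)
  have hZ : Subgroup.center (Q : Subgroup G) = ⊥ :=
    le_bot_iff.mp (hfQ ▸ center_le_frattini_of_perfect hperf)
  haveI := hsimp
  have e2 : ((Q : Subgroup G) ⧸ Subgroup.center Q) ≃* Q :=
    (QuotientGroup.quotientMulEquivOfEq hZ).trans QuotientGroup.quotientBot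
  haveI : Nontrivial (Q : Subgroup G) := e2.toEquiv.symm.nontrivial
  exact ⟨IsSimpleGroup.isSimpleGroup_of_surjective e2.toMonoidHom e2.surjective, hZ⟩
end

section
/- If G is a finite group with Φ(G) = 1, then F(G) ∩ E(G) = 1, where E(G) is the layer (the product of all components) and F(G) the Fitting subgroup; consequently the generalised Fitting subgroup F*(G) is the (internal) direct product F(G) × E(G). -/
open Subgroup
open scoped commutatorElement

section Aux
variable {G : Type*} [Group G]

lemma aux_comm_left {d k b : G} (hdb : Commute d b) (hdk : Commute d k) :
    ⁅d * k, b⁆ = ⁅k, b⁆ := by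
  have h : Commute d (k * b * k⁻¹) := (hdk.mul_right hdb).mul_right hdk.inv_right
  have h2 : d * (k * b * k⁻¹) * d⁻¹ = k * b * k⁻¹ := by rw [h.eq]; group
  calc ⁅d * k, b⁆ = d * (k * b * k⁻¹) * d⁻¹ * b⁻¹ := by
        simp only [commutatorElement_def, mul_inv_rev]; group
    _ = k * b * k⁻¹ * b⁻¹ := by rw [h2]
    _ = ⁅k, b⁆ := by simp only [commutatorElement_def]

lemma aux_comm_right {d k b : G} (hdb : Commute d b) (hdk : Commute d k) :
    ⁅b, d * k⁆ = ⁅b, k⁆ := by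
  rw [← commutatorElement_inv, aux_comm_left hdb hdk, commutatorElement_inv]

/-- characterisation of relative normality -/
lemma aux_subgroupOf_normal_iff {H K : Subgroup G} (hHK : H ≤ K) :
    (H.subgroupOf K).Normal ↔ ∀ x ∈ H, ∀ k ∈ K, k * x * k⁻¹ ∈ H := by
  constructor
  · intro hn x hx k hk
    have := hn.conj_mem ⟨x, hHK hx⟩ (by simpa [Subgroup.mem_subgroupOf] using hx) ⟨k, hk⟩
    simpa [Subgroup.mem_subgroupOf] using this
  · intro h
    constructor
    intro n hn g
    rw [Subgroup.mem_subgroupOf] at hn ⊢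
    exact h _ hn _ g.2

lemma aux_subsingleton {H : Type*} [Group H] [Group.IsNilpotent H]
    (h : commutator H = ⊤) : Subsingleton H := by
  have key : ∀ n, Subgroup.lowerCentralSeries (⊤ : Subgroup H) n = ⊤ := by
    intro n
    induction n with
    | zero => simp
    | succ n ih => rw [Subgroup.lowerCentralSeries_succ, ih]; exact h
  obtain ⟨n, hn⟩ := Subgroup.nilpotent_iff_lowerCentralSeries.mp ‹_›
  rw [key n] at hn
  constructor
  intro a b
  have ha : a ∈ (⊥ : Subgroup H) := hn ▸ mem_top a
  have hb : b ∈ (⊥ : Subgroup H) := hn ▸ mem_top b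
  rw [Subgroup.mem_bot] at ha hb
  rw [ha, hb]

/-- A quasisimple subgroup is perfect. -/
lemma aux_perfect {Q : Subgroup G} (hQ : IsQuasiSimple Q) : ⁅Q, Q⁆ = Q := by
  have h1 := hQ.1
  have := congrArg (Subgroup.map Q.subtype) h1
  rw [commutator_def, Subgroup.map_commutator] at this
  simpa [← MonoidHom.range_eq_map, Subgroup.range_subtype] using this

/-- The intersection of a nilpotent normal subgroup with a quasisimple subgroup is
centralized by the quasisimple subgroup. -/
lemma aux_qs_inf_central {Q N : Subgroup G} (hQ : IsQuasiSimple Q)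
    (hN : N.Normal) (hnil : Group.IsNilpotent N) :
    ∀ x ∈ N ⊓ Q, ∀ y ∈ Q, Commute y x := by
  set M : Subgroup Q := (N ⊓ Q).subgroupOf Q with hM
  have hMn : M.Normal := by
    rw [aux_subgroupOf_normal_iff inf_le_right]
    rintro x ⟨hxN, hxQ⟩ k hk
    exact ⟨hN.conj_mem x hxN k, Q.mul_mem (Q.mul_mem hk hxQ) (Q.inv_mem hk)⟩
  haveI := hQ.2
  set φ : Q →* Q ⧸ Subgroup.center Q := QuotientGroup.mk' (Subgroup.center Q) with hφ
  have hφs : Function.Surjective φ := QuotientGroup.mk'_surjective _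
  rcases (hMn.map φ hφs).eq_bot_or_eq_top with hbot | htop
  · -- M is central in Q
    have hMc : M ≤ Subgroup.center Q := by
      have := (Subgroup.map_eq_bot_iff M).mp hbot
      rwa [hφ, QuotientGroup.ker_mk'] at this
    intro x hx y hy
    have hxM : (⟨x, hx.2⟩ : Q) ∈ M := by
      rw [hM, Subgroup.mem_subgroupOf]; exact hx
    have := Subgroup.mem_center_iff.mp (hMc hxM) ⟨y, hy⟩
    have := Subtype.ext_iff.mp this
    exact this
  · -- impossible: Q would be nilpotent
    exfalso
    have hsup : M ⊔ Subgroup.center Q = ⊤ := by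
      have := congrArg (Subgroup.comap φ) htop
      rw [Subgroup.comap_map_eq, hφ, QuotientGroup.ker_mk'] at this
      rw [this]
      exact Subgroup.comap_top φ
    have hcle : commutator Q ≤ M := by
      rw [_root_.commutator_def, Subgroup.commutator_le]
      intro a _ b _
      have ha : a ∈ (↑(M ⊔ Subgroup.center Q) : Set Q) := by rw [hsup]; trivial
      have hb : b ∈ (↑(M ⊔ Subgroup.center Q) : Set Q) := by rw [hsup]; trivial
      rw [Subgroup.mul_normal] at ha hb
      obtain ⟨m, hm, z, hz, rfl⟩ := ha
      obtain ⟨m', hm', z', hz', rfl⟩ := hb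
      have hzc : ∀ g : Q, Commute z g := fun g =>
        ((Subgroup.mem_center_iff.mp hz g)).symm
      have hzc' : ∀ g : Q, Commute z' g := fun g =>
        ((Subgroup.mem_center_iff.mp hz' g)).symm
      have e1 : ⁅m * z, m' * z'⁆ = ⁅m, m'⁆ := by
        rw [show m * z = z * m from (hzc m).eq.symm,
          show m' * z' = z' * m' from (hzc' m').eq.symm,
          aux_comm_left ((hzc _)) (hzc m), aux_comm_right (hzc' m) (hzc' m')]
      rw [e1]
      have : m' * m⁻¹ * m'⁻¹ ∈ M := hMn.conj_mem _ (M.inv_mem hm) m'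
      have := M.mul_mem hm this
      simpa [commutatorElement_def, mul_assoc] using this
    have hMtop : M = ⊤ := top_le_iff.mp (hQ.1 ▸ hcle)
    have hQN : Q ≤ N := by
      intro x hx
      have : (⟨x, hx⟩ : Q) ∈ M := hMtop ▸ Subgroup.mem_top _
      rw [hM, Subgroup.mem_subgroupOf] at this
      exact this.1
    haveI : Group.IsNilpotent N := hnil
    haveI : Group.IsNilpotent (Q.subgroupOf N) := Subgroup.isNilpotent _
    haveI : Group.IsNilpotent Q := nilpotent_of_mulEquiv (Subgroup.subgroupOfEquivOfLe hQN)
    haveI hss : Subsingleton Q := aux_subsingleton hQ.1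
    haveI : Subsingleton (Q ⧸ Subgroup.center Q) :=
      ⟨fun a b => Quotient.inductionOn₂ a b fun x y => congrArg _ (Subsingleton.elim x y)⟩
    exact false_of_nontrivial_of_subsingleton (Q ⧸ Subgroup.center Q)

/-- A component centralizes every nilpotent normal subgroup. -/
lemma aux_component_centralizes {L N : Subgroup G} (hL : IsComponent L)
    (hN : N.Normal) (hnil : Group.IsNilpotent N) :
    ∀ y ∈ L, ∀ x ∈ N, Commute y x := by
  obtain ⟨⟨n, c, hc0, hcn, hchain⟩, hqs⟩ := hL
  have hLle : ∀ i, L ≤ c i := by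
    intro i
    induction i with
    | zero => rw [hc0]
    | succ i ih => exact ih.trans (hchain i).1
  have key : ∀ i, ⁅L, N ⊓ c i⁆ = ⊥ := by
    intro i
    induction i with
    | zero =>
      rw [hc0, eq_bot_iff, Subgroup.commutator_le]
      intro y hy x hx
      rw [Subgroup.mem_bot, commutatorElement_eq_one_iff_commute]
      exact aux_qs_inf_central hqs hN hnil x hx y hy
    | succ i ih =>
      have h1 : ⁅L, N ⊓ c (i + 1)⁆ ≤ N ⊓ c i := by
        rw [Subgroup.commutator_le]
        rintro g₁ hg₁ g₂ ⟨hg₂N, hg₂c⟩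
        constructor
        · have : g₁ * g₂ * g₁⁻¹ ∈ N := hN.conj_mem g₂ hg₂N g₁
          have := N.mul_mem this (N.inv_mem hg₂N)
          simpa [commutatorElement_def, mul_assoc] using this
        · have hnorm := (aux_subgroupOf_normal_iff (hchain i).1).mp (hchain i).2
          have h2 : g₂ * g₁⁻¹ * g₂⁻¹ ∈ c i :=
            hnorm g₁⁻¹ ((c i).inv_mem (hLle i hg₁)) g₂ hg₂c
          have := (c i).mul_mem (hLle i hg₁) h2
          simpa [commutatorElement_def, mul_assoc] using this
      have hb1 : ⁅⁅L, N ⊓ c (i + 1)⁆, L⁆ = ⊥ := by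
        rw [eq_bot_iff, ← ih]
        exact (Subgroup.commutator_mono h1 le_rfl).trans
          (le_of_eq (Subgroup.commutator_comm _ _))
      have hb2 : ⁅⁅N ⊓ c (i + 1), L⁆, L⁆ = ⊥ := by
        rw [Subgroup.commutator_comm (N ⊓ c (i+1)) L]; exact hb1
      have := Subgroup.commutator_commutator_eq_bot_of_rotate hb1 hb2
      rwa [aux_perfect hqs] at this
  intro y hy x hx
  have := key n
  rw [hcn, inf_top_eq] at this
  have hmem : ⁅y, x⁆ ∈ (⊥ : Subgroup G) := by
    rw [← this]
    exact Subgroup.commutator_mem_commutator hy hx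
  rwa [Subgroup.mem_bot, commutatorElement_eq_one_iff_commute] at hmem

/-- quasisimplicity transfers along isomorphisms -/
lemma aux_qs_equiv {H K : Type*} [Group H] [Group K] (e : H ≃* K)
    (h : IsQuasiSimple H) : IsQuasiSimple K := by
  have hmaptop : Subgroup.map e.toMonoidHom ⊤ = ⊤ :=
    Subgroup.map_top_of_surjective _ e.surjective
  constructor
  · rw [_root_.commutator_def, ← hmaptop, ← Subgroup.map_commutator,
      ← _root_.commutator_def, h.1, hmaptop]
  · have hc : (Subgroup.center H).map e.toMonoidHom = Subgroup.center K := by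
      ext x
      rw [Subgroup.mem_map]
      constructor
      · rintro ⟨y, hy, rfl⟩
        rw [Subgroup.mem_center_iff]
        intro k
        obtain ⟨g, rfl⟩ := e.surjective k
        have := Subgroup.mem_center_iff.mp hy g
        simpa [map_mul] using congrArg e this
      · intro hx
        refine ⟨e.symm x, ?_, by simp⟩
        rw [Subgroup.mem_center_iff]
        intro g
        have := Subgroup.mem_center_iff.mp hx (e g)
        simpa [map_mul] using congrArg e.symm this
    have equot := QuotientGroup.congr (Subgroup.center H) (Subgroup.center K) e hc
    haveI := h.2
    haveI : Nontrivial (K ⧸ Subgroup.center K) := equot.symm.toEquiv.nontrivial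
    exact IsSimpleGroup.isSimpleGroup_of_surjective equot.toMonoidHom equot.surjective

/-- components are preserved by conjugation -/
lemma aux_comp_conj (g : G) {Q : Subgroup G} (h : IsComponent Q) :
    IsComponent (Q.map (MulAut.conj g).toMonoidHom) := by
  set φ := (MulAut.conj g) with hφdef
  obtain ⟨⟨n, c, hc0, hcn, hchain⟩, hqs⟩ := h
  constructor
  · refine ⟨n, fun i => (c i).map φ.toMonoidHom, by simp only [hc0], ?_, ?_⟩
    · simp only [hcn]; exact Subgroup.map_top_of_surjective _ φ.surjective
    · intro i
      refine ⟨Subgroup.map_mono (hchain i).1, ?_⟩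
      rw [aux_subgroupOf_normal_iff (Subgroup.map_mono (hchain i).1)]
      rintro x hx k hk
      rw [Subgroup.mem_map_equiv] at hx hk ⊢
      simp only [map_mul, map_inv]
      exact (aux_subgroupOf_normal_iff (hchain i).1).mp (hchain i).2 _ hx _ hk
  · exact aux_qs_equiv (Subgroup.equivMapOfInjective Q φ.toMonoidHom φ.injective) hqs

lemma aux_layer_normal : (layer G).Normal := by
  constructor
  intro x hx g
  set φ := (MulAut.conj g) with hφdef
  have : g * x * g⁻¹ = φ x := rfl
  rw [this]
  have hmem : φ x ∈ (layer G).map φ.toMonoidHom :=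
    Subgroup.mem_map_of_mem _ hx
  rw [layer, MonoidHom.map_closure] at hmem
  refine Subgroup.closure_mono ?_ hmem
  rintro y ⟨t, ⟨Q, hQ, htQ⟩, rfl⟩
  exact ⟨Q.map φ.toMonoidHom, aux_comp_conj g hQ, Subgroup.mem_map_of_mem _ htQ⟩

/-- the layer is perfect -/
lemma aux_layer_perfect : ⁅layer G, layer G⁆ = layer G := by
  apply le_antisymm
  · rw [Subgroup.commutator_le]
    intro a ha b hb
    rw [commutatorElement_def]
    exact (layer G).mul_mem ((layer G).mul_mem ((layer G).mul_mem ha hb)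
      ((layer G).inv_mem ha)) ((layer G).inv_mem hb)
  · rw [layer, Subgroup.closure_le]
    rintro t ⟨Q, hQ, htQ⟩
    have hQle : Q ≤ layer G := fun u hu => Subgroup.subset_closure ⟨Q, hQ, hu⟩
    have := aux_perfect hQ.2
    have h2 : Q ≤ ⁅layer G, layer G⁆ := by
      conv_lhs => rw [← this]
      exact Subgroup.commutator_mono hQle hQle
    exact h2 htQ

/-- The Fitting subgroup centralizes the layer. -/
lemma aux_fitting_layer_commute : ∀ x ∈ fitting G, ∀ y ∈ layer G, Commute x y := by
  haveI hlm : (layer G).Normal := aux_layer_normal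
  have hcent : ∀ z ∈ {x : G | ∃ N : Subgroup G, N.Normal ∧ Group.IsNilpotent N ∧ x ∈ N},
      z ∈ Subgroup.centralizer (layer G : Set G) := by
    rintro z ⟨N, hNn, hNnil, hzN⟩
    have hle : layer G ≤ Subgroup.centralizer {z} := by
      rw [layer, Subgroup.closure_le]
      rintro t ⟨Q, hQ, htQ⟩
      rw [SetLike.mem_coe, Subgroup.mem_centralizer_iff]
      rintro h rfl
      exact (aux_component_centralizes hQ hNn hNnil t htQ h hzN).symm.eq
    rw [Subgroup.mem_centralizer_iff]
    intro h hh
    have := Subgroup.mem_centralizer_iff.mp (hle hh) z rfl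
    exact this.symm
  haveI hcn : (Subgroup.centralizer ((layer G : Set G))).Normal := by
    constructor
    intro c hc g
    rw [Subgroup.mem_centralizer_iff] at hc ⊢
    intro h hh
    have h' : g⁻¹ * h * g ∈ layer G := by
      have := hlm.conj_mem h hh g⁻¹; simpa using this
    have hch := hc _ h'
    calc h * (g * c * g⁻¹) = g * ((g⁻¹ * h * g) * c) * g⁻¹ := by group
      _ = g * (c * (g⁻¹ * h * g)) * g⁻¹ := by rw [hch]
      _ = (g * c * g⁻¹) * h := by group
  intro x hx y hy
  have hxc : x ∈ Subgroup.centralizer (layer G : Set G) :=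
    Subgroup.normalClosure_le_normal hcent hx
  exact (Subgroup.mem_centralizer_iff.mp hxc y hy).symm

/-- Gaschütz-type complement: if `Φ(G) = 1` then every normal subgroup whose elements
pairwise commute has a complement. -/
lemma aux_gaschutz [Finite G] (hG : frattini G = ⊥) {D : Subgroup G} (hD : D.Normal)
    (hab : ∀ a ∈ D, ∀ b ∈ D, Commute a b) :
    ∃ K : Subgroup G, D ⊔ K = ⊤ ∧ D ⊓ K = ⊥ := by
  obtain ⟨K, hKs, hmin⟩ := (Finite.to_wellFoundedLT (α := Subgroup G)).wf.has_min
    {K : Subgroup G | D ⊔ K = ⊤} ⟨⊤, by simp⟩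
  have hK : D ⊔ K = ⊤ := hKs
  refine ⟨K, hK, ?_⟩
  set X := D ⊓ K with hXdef
  haveI hXn : X.Normal := by
    constructor
    intro x hx g
    have hg : g ∈ (↑(D ⊔ K) : Set G) := by rw [hK]; trivial
    rw [Subgroup.normal_mul] at hg
    obtain ⟨d, hd, k, hk, rfl⟩ := hg
    have hconjk : k * x * k⁻¹ ∈ X :=
      ⟨hD.conj_mem x hx.1 k, K.mul_mem (K.mul_mem hk hx.2) (K.inv_mem hk)⟩
    have hcomm : d * (k * x * k⁻¹) * d⁻¹ = k * x * k⁻¹ := by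
      rw [(hab d hd _ hconjk.1).eq]; group
    have harr : (d * k) * x * (d * k)⁻¹ = d * (k * x * k⁻¹) * d⁻¹ := by group
    rw [harr, hcomm]
    exact hconjk
  have hXfr : X ≤ frattini G := by
    rw [frattini, Order.radical]
    refine le_iInf fun M => le_iInf fun hM => ?_
    by_contra hXM
    have hlt : M < X ⊔ M := lt_of_le_of_ne le_sup_right
      (fun he => hXM (he ▸ le_sup_left))
    have hsupM : X ⊔ M = ⊤ := hM.2 _ hlt
    have hKle : K ≤ X ⊔ (K ⊓ M) := by
      intro k hk
      have hkm : k ∈ (↑(X ⊔ M) : Set G) := by rw [hsupM]; trivial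
      rw [Subgroup.normal_mul] at hkm
      obtain ⟨x, hx, m, hm, rfl⟩ := hkm
      have hmK : m ∈ K ⊓ M := by
        refine ⟨?_, hm⟩
        have := K.mul_mem (K.inv_mem hx.2) hk
        simpa [mul_assoc] using this
      exact Subgroup.mul_mem _ (Subgroup.mem_sup_left hx) (Subgroup.mem_sup_right hmK)
    have h2 : D ⊔ (K ⊓ M) = ⊤ := by
      refine le_antisymm le_top ?_
      rw [← hK]
      refine sup_le le_sup_left (hKle.trans (sup_le ?_ le_sup_right))
      exact (inf_le_left : X ≤ D).trans le_sup_left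
    have hnotlt : ¬ (K ⊓ M < K) := hmin _ h2
    have hKM : K ≤ M := by
      rcases eq_or_lt_of_le (inf_le_left : K ⊓ M ≤ K) with he | hl
      · rw [← he]; exact inf_le_right
      · exact absurd hl hnotlt
    exact hXM ((inf_le_right : X ≤ K).trans hKM)
  rw [hG] at hXfr
  exact le_bot_iff.mp hXfr

end Aux

/-- If `Φ(G) = 1` then `F(G) ∩ E(G) = 1`, the two subgroups commute elementwise,
and `F*(G)` is their (internal direct) product `F(G) × E(G)`. -/
theorem stmt_8 (G : Type*) [Group G] [Finite G] (hG : frattini G = ⊥) :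
    fitting G ⊓ layer G = ⊥ ∧ (∀ x ∈ fitting G, ∀ y ∈ layer G, Commute x y) ∧
      genFitting G = fitting G ⊔ layer G := by
  have hA : ∀ x ∈ fitting G, ∀ y ∈ layer G, Commute x y := aux_fitting_layer_commute
  refine ⟨?_, hA, rfl⟩
  set D := fitting G ⊓ layer G with hDdef
  have hDn : D.Normal := by
    haveI h1 : (fitting G).Normal := Subgroup.normalClosure_normal
    haveI h2 : (layer G).Normal := aux_layer_normal
    constructor
    intro x hx g
    exact ⟨h1.conj_mem x hx.1 g, h2.conj_mem x hx.2 g⟩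
  have hab : ∀ a ∈ D, ∀ b ∈ D, Commute a b := fun a ha b hb => hA a ha.1 b hb.2
  obtain ⟨K, hK, hDK⟩ := aux_gaschutz hG hDn hab
  haveI := hDn
  have hEK : layer G ≤ K := by
    have key : ⁅layer G, layer G⁆ ≤ K := by
      rw [Subgroup.commutator_le]
      intro a ha b hb
      have haset : a ∈ (↑(D ⊔ K) : Set G) := by rw [hK]; trivial
      have hbset : b ∈ (↑(D ⊔ K) : Set G) := by rw [hK]; trivial
      rw [Subgroup.normal_mul] at haset hbset
      obtain ⟨d₁, hd₁, k₁, hk₁, rfl⟩ := haset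
      obtain ⟨d₂, hd₂, k₂, hk₂, rfl⟩ := hbset
      have hk₁E : k₁ ∈ layer G := by
        have := (layer G).mul_mem ((layer G).inv_mem hd₁.2) ha
        simpa [mul_assoc] using this
      have hk₂E : k₂ ∈ layer G := by
        have := (layer G).mul_mem ((layer G).inv_mem hd₂.2) hb
        simpa [mul_assoc] using this
      have e1 : ⁅d₁ * k₁, d₂ * k₂⁆ = ⁅k₁, d₂ * k₂⁆ :=
        aux_comm_left (hA d₁ hd₁.1 _ hb) (hA d₁ hd₁.1 _ hk₁E)
      have e2 : ⁅k₁, d₂ * k₂⁆ = ⁅k₁, k₂⁆ :=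
        aux_comm_right (hA d₂ hd₂.1 _ hk₁E) (hA d₂ hd₂.1 _ hk₂E)
      rw [e1, e2, commutatorElement_def]
      exact K.mul_mem (K.mul_mem (K.mul_mem hk₁ hk₂) (K.inv_mem hk₁)) (K.inv_mem hk₂)
    calc layer G = ⁅layer G, layer G⁆ := (aux_layer_perfect).symm
      _ ≤ K := key
  have hfinal : D ≤ D ⊓ K := le_inf le_rfl ((inf_le_right : D ≤ layer G).trans hEK)
  rw [hDK] at hfinal
  exact le_bot_iff.mp hfinal
end

section
/- Let G be a finite group with Φ(G) = 1 and let N be a normal subgroup of G contained in F*(G). Then N = F(N) × E(N), and moreover F(N) = Z(N). -/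
open Subgroup
open scoped commutatorElement

section Helpers

variable {G : Type*} [Group G]

/-- constructor for normality of `A.subgroupOf B`. -/
lemma normal_subgroupOf_mk {A B : Subgroup G}
    (h : ∀ x g : G, x ∈ A → x ∈ B → g ∈ B → g * x * g⁻¹ ∈ A) :
    (A.subgroupOf B).Normal := by
  constructor
  rintro ⟨x, hxB⟩ hx ⟨g, hgB⟩
  rw [Subgroup.mem_subgroupOf] at hx ⊢
  exact h x g hx hxB hgB

lemma conj_mem_of_normal_subgroupOf {A B : Subgroup G}
    (h : (A.subgroupOf B).Normal) {x g : G} (hx : x ∈ A) (hxB : x ∈ B) (hg : g ∈ B) :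
    g * x * g⁻¹ ∈ A := by
  have := h.conj_mem ⟨x, hxB⟩ (Subgroup.mem_subgroupOf.2 hx) ⟨g, hg⟩
  rwa [Subgroup.mem_subgroupOf] at this

/-- elements of the join of two elementwise-commuting subgroups factor. -/
lemma mem_sup_of_commute {H K : Subgroup G}
    (h : ∀ x ∈ H, ∀ y ∈ K, Commute x y) {z : G} (hz : z ∈ H ⊔ K) :
    ∃ x ∈ H, ∃ y ∈ K, z = x * y := by
  let T : Subgroup G :=
    { carrier := {z | ∃ x ∈ H, ∃ y ∈ K, z = x * y}
      one_mem' := ⟨1, one_mem _, 1, one_mem _, by simp⟩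
      mul_mem' := by
        rintro a b ⟨x, hx, y, hy, rfl⟩ ⟨x', hx', y', hy', rfl⟩
        refine ⟨x * x', mul_mem hx hx', y * y', mul_mem hy hy', ?_⟩
        have := (h x' hx' y hy).symm
        unfold Commute SemiconjBy at this
        rw [mul_assoc x y, ← mul_assoc y x' y', this, mul_assoc x' y y', ← mul_assoc x x' (y * y')]
      inv_mem' := by
        rintro a ⟨x, hx, y, hy, rfl⟩
        refine ⟨x⁻¹, inv_mem hx, y⁻¹, inv_mem hy, ?_⟩
        rw [mul_inv_rev]
        exact ((h x⁻¹ (inv_mem hx) y⁻¹ (inv_mem hy)).symm).eq }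
  have hH : H ≤ T := fun x hx => ⟨x, hx, 1, one_mem _, by simp⟩
  have hK : K ≤ T := fun y hy => ⟨1, one_mem _, y, hy, by simp⟩
  exact sup_le hH hK hz

/-- a perfect subgroup equals its own commutator subgroup. -/
lemma commutator_self_of_quasi {L : Subgroup G} (hL : commutator ↥L = ⊤) :
    ⁅L, L⁆ = L := by
  have h1 : Subgroup.map L.subtype (commutator ↥L) = ⁅L, L⁆ := by
    rw [commutator_def, Subgroup.map_commutator]
    congr 1 <;>
      rw [← MonoidHom.range_eq_map, Subgroup.range_subtype]
  rw [hL] at h1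
  rw [← h1, ← MonoidHom.range_eq_map, Subgroup.range_subtype]

end Helpers

section Chunk2
variable {G : Type*} [Group G]

lemma map_equiv_center {G' : Type*} [Group G'] (e : G ≃* G') :
    (Subgroup.center G).map e.toMonoidHom = Subgroup.center G' := by
  ext y
  simp only [Subgroup.mem_map, Subgroup.mem_center_iff]
  constructor
  · rintro ⟨x, hx, rfl⟩ g
    obtain ⟨h, rfl⟩ := e.surjective g
    show e h * e x = e x * e h
    rw [← map_mul, ← map_mul, hx h]
  · intro hy
    refine ⟨e.symm y, fun g => ?_, by simp⟩
    apply e.injective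
    rw [map_mul, map_mul, e.apply_symm_apply]
    exact hy (e g)

lemma IsQuasiSimple.of_mulEquiv {Q R : Type*} [Group Q] [Group R] (e : Q ≃* R)
    (h : IsQuasiSimple Q) : IsQuasiSimple R := by
  obtain ⟨h1, h2⟩ := h
  constructor
  · have : (commutator Q).map e.toMonoidHom = commutator R := by
      rw [commutator_def, commutator_def, Subgroup.map_commutator]
      have ht : (⊤ : Subgroup Q).map e.toMonoidHom = ⊤ := by
        rw [← MonoidHom.range_eq_map]
        exact MonoidHom.range_eq_top.2 e.surjective
      rw [ht]
    rw [← this, h1]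
    rw [← MonoidHom.range_eq_map]
    exact MonoidHom.range_eq_top.2 e.surjective
  · have e' : (Q ⧸ Subgroup.center Q) ≃* (R ⧸ Subgroup.center R) :=
      QuotientGroup.congr _ _ e (map_equiv_center e)
    haveI : Nontrivial (Q ⧸ Subgroup.center Q) := h2.toNontrivial
    haveI : Nontrivial (R ⧸ Subgroup.center R) := e'.symm.toEquiv.nontrivial
    haveI := h2
    exact IsSimpleGroup.isSimpleGroup_of_surjective e'.toMonoidHom e'.surjective

lemma IsSubnormal.subgroupOf {H K : Subgroup G} (h : _root_.IsSubnormal H) (hHK : H ≤ K) :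
    _root_.IsSubnormal (H.subgroupOf K) := by
  obtain ⟨n, c, hc0, hcn, hstep⟩ := h
  refine ⟨n, fun i => ((c i) ⊓ K).subgroupOf K, ?_, ?_, ?_⟩
  · show ((c 0) ⊓ K).subgroupOf K = _
    rw [hc0, inf_of_le_left hHK]
  · show ((c n) ⊓ K).subgroupOf K = _
    rw [hcn, top_inf_eq, subgroupOf_self]
  · intro i
    constructor
    · exact Subgroup.comap_mono (inf_le_inf_right K (hstep i).1)
    · apply normal_subgroupOf_mk
      rintro x g hx hxB hg
      rw [Subgroup.mem_subgroupOf] at hx ⊢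
      rcases hx with ⟨hx1, hx2⟩
      rw [Subgroup.mem_subgroupOf] at hg
      refine ⟨?_, ?_⟩
      · push_cast
        exact conj_mem_of_normal_subgroupOf (hstep i).2 hx1 ((hstep i).1 hx1) hg.1
      · exact SetLike.coe_mem _

lemma IsSubnormal.map_equiv {G' : Type*} [Group G'] (e : G ≃* G') {H : Subgroup G}
    (h : _root_.IsSubnormal H) : _root_.IsSubnormal (H.map e.toMonoidHom) := by
  obtain ⟨n, c, hc0, hcn, hstep⟩ := h
  refine ⟨n, fun i => (c i).map e.toMonoidHom, by show (c 0).map _ = _; rw [hc0], ?_, ?_⟩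
  · show (c n).map e.toMonoidHom = ⊤
    rw [hcn, ← MonoidHom.range_eq_map]
    exact MonoidHom.range_eq_top.2 e.surjective
  · intro i
    refine ⟨Subgroup.map_mono (hstep i).1, ?_⟩
    apply normal_subgroupOf_mk
    rintro x g hx hxB hg
    rcases hx with ⟨a, ha, rfl⟩
    rcases hg with ⟨b, hb, rfl⟩
    refine ⟨b * a * b⁻¹, conj_mem_of_normal_subgroupOf (hstep i).2 ha ((hstep i).1 ha) hb, by
      simp [map_mul]⟩

lemma normal_of_subgroupOf_top {H : Subgroup G} (h : ((H.subgroupOf (⊤ : Subgroup G))).Normal) :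
    H.Normal := by
  constructor
  intro x hx g
  exact conj_mem_of_normal_subgroupOf h hx trivial trivial

lemma IsComponent.subgroupOf {Q K : Subgroup G} (h : IsComponent Q) (hQK : Q ≤ K) :
    IsComponent (Q.subgroupOf K) :=
  ⟨h.1.subgroupOf hQK, IsQuasiSimple.of_mulEquiv (Subgroup.subgroupOfEquivOfLe hQK).symm h.2⟩

lemma IsComponent.map_conj {Q : Subgroup G} (h : IsComponent Q) (g : G) :
    IsComponent (Q.map (MulAut.conj g).toMonoidHom) :=
  ⟨h.1.map_equiv _, IsQuasiSimple.of_mulEquiv (MulEquiv.subgroupMap (MulAut.conj g) Q) h.2⟩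

end Chunk2
section Chunk3
variable {G : Type*} [Group G]

lemma commutatorElement_central_left (m b z : G) (hz : z ∈ Subgroup.center G) :
    ⁅m * z, b⁆ = ⁅m, b⁆ := by
  have hb : b * z = z * b := Subgroup.mem_center_iff.1 hz b
  calc ⁅m * z, b⁆ = m * z * b * (z⁻¹ * m⁻¹) * b⁻¹ := by
        rw [commutatorElement_def, mul_inv_rev]
    _ = m * (b * z) * (z⁻¹ * m⁻¹) * b⁻¹ := by rw [mul_assoc m z b, ← hb]
    _ = m * b * (z * z⁻¹) * m⁻¹ * b⁻¹ := by group
    _ = ⁅m, b⁆ := by rw [commutatorElement_def]; group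

lemma commutatorElement_central_both (m m' z z' : G) (hz : z ∈ Subgroup.center G)
    (hz' : z' ∈ Subgroup.center G) : ⁅m * z, m' * z'⁆ = ⁅m, m'⁆ := by
  rw [commutatorElement_central_left m (m' * z') z hz,
    ← commutatorElement_inv (m' * z') m, commutatorElement_central_left m' m z' hz',
    commutatorElement_inv m' m]

universe u

lemma component_core :
    ∀ (n : ℕ) (G : Type u) [Group G] (L M : Subgroup G) (c : ℕ → Subgroup G),
      c 0 = L → c n = ⊤ → (∀ i, c i ≤ c (i + 1) ∧ ((c i).subgroupOf (c (i + 1))).Normal) →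
      IsQuasiSimple ↥L → M.Normal →
      L ≤ M ∨ ∀ x ∈ L, ∀ y ∈ M, Commute x y := by
  intro n
  induction n with
  | zero =>
    intro G _ L M c hc0 hcn _ hQS hM
    have hLtop : L = ⊤ := by rw [← hc0, hcn]
    subst hLtop
    have hQ : IsQuasiSimple G := IsQuasiSimple.of_mulEquiv Subgroup.topEquiv hQS
    by_cases hMc : M ≤ Subgroup.center G
    · right
      intro x _ y hy
      exact Subgroup.mem_center_iff.1 (hMc hy) x
    · left
      haveI := hQ.2
      haveI : M.Normal := hM
      set π := QuotientGroup.mk' (Subgroup.center G)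
      have hmap : (M.map π).Normal := hM.map π (QuotientGroup.mk'_surjective _)
      rcases hmap.eq_bot_or_eq_top with hb | ht
      · exfalso
        apply hMc
        intro m hm
        have : π m ∈ M.map π := Subgroup.mem_map_of_mem π hm
        rw [hb, Subgroup.mem_bot] at this
        have : m ∈ π.ker := this
        rwa [QuotientGroup.ker_mk'] at this
      · have hsup : M ⊔ Subgroup.center G = ⊤ := by
          have := congrArg (Subgroup.comap π) ht
          rwa [Subgroup.comap_map_eq, QuotientGroup.ker_mk', Subgroup.comap_top] at this
        have hcomm : ∀ x ∈ M, ∀ y ∈ Subgroup.center G, Commute x y :=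
          fun x _ y hy => ((Subgroup.mem_center_iff.1 hy) x)
        have : commutator G ≤ M := by
          rw [_root_.commutator_def, Subgroup.commutator_le]
          intro g1 _ g2 _
          obtain ⟨m, hm, z, hz, rfl⟩ := mem_sup_of_commute hcomm (hsup ▸ Subgroup.mem_top g1)
          obtain ⟨m', hm', z', hz', rfl⟩ := mem_sup_of_commute hcomm (hsup ▸ Subgroup.mem_top g2)
          rw [commutatorElement_central_both m m' z z' hz hz']
          have : ⁅m, m'⁆ = (m * m' * m⁻¹) * m'⁻¹ := by group
          rw [this]
          exact mul_mem (hM.conj_mem m' hm' m) (inv_mem hm')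
        rw [hQ.1] at this
        exact fun x _ => this (Subgroup.mem_top x)
  | succ n ih =>
    intro G _ L M c hc0 hcn1 hstep hQS hM
    set K := c n with hK
    have hmono : Monotone c := monotone_nat_of_le_succ (fun i => (hstep i).1)
    have hLK : L ≤ K := hc0 ▸ hmono (Nat.zero_le n)
    have hKnormal : K.Normal := by
      have hn := (hstep n).2
      rw [hcn1] at hn
      exact normal_of_subgroupOf_top hn
    -- restricted chain inside K
    have hMK : (M.subgroupOf K).Normal := by
      apply normal_subgroupOf_mk
      intro x g hx _ _
      exact hM.conj_mem x hx g
    have hQS' : IsQuasiSimple ↥(L.subgroupOf K) :=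
      IsQuasiSimple.of_mulEquiv (Subgroup.subgroupOfEquivOfLe hLK).symm hQS
    have hres := ih ↥K (L.subgroupOf K) (M.subgroupOf K)
      (fun i => (c (min i n)).subgroupOf K)
      (by show (c (min 0 n)).subgroupOf K = _; rw [Nat.zero_min, hc0])
      (by show (c (min n n)).subgroupOf K = ⊤; rw [min_self]; exact K.subgroupOf_self)
      ?_ hQS' hMK
    rotate_left
    · intro i
      rcases le_or_gt n i with hni | hin
      · have e1 : min i n = n := min_eq_right hni
        have e2 : min (i+1) n = n := min_eq_right (le_trans hni (Nat.le_succ i))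
        constructor
        · show (c (min i n)).subgroupOf K ≤ (c (min (i+1) n)).subgroupOf K
          rw [e1, e2]
        · show ((((c (min i n)).subgroupOf K)).subgroupOf (((c (min (i+1) n)).subgroupOf K))).Normal
          apply normal_subgroupOf_mk
          intro x g _ _ _
          rw [Subgroup.mem_subgroupOf, e1]
          exact SetLike.coe_mem _
      · have e1 : min i n = i := min_eq_left (le_of_lt hin)
        have e2 : min (i+1) n = i + 1 := min_eq_left hin
        constructor
        · show (c (min i n)).subgroupOf K ≤ (c (min (i+1) n)).subgroupOf K
          rw [e1, e2]
          exact Subgroup.comap_mono (hstep i).1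
        · show ((((c (min i n)).subgroupOf K)).subgroupOf (((c (min (i+1) n)).subgroupOf K))).Normal
          apply normal_subgroupOf_mk
          intro x g hx hxB hg
          rw [Subgroup.mem_subgroupOf, e1] at hx ⊢
          rw [Subgroup.mem_subgroupOf, e2] at hg
          push_cast
          exact conj_mem_of_normal_subgroupOf (hstep i).2 hx ((hstep i).1 hx) hg
    rcases hres with hle | hcomm
    · left
      intro x hx
      have : (⟨x, hLK hx⟩ : ↥K) ∈ L.subgroupOf K := Subgroup.mem_subgroupOf.2 hx
      exact Subgroup.mem_subgroupOf.1 (hle this)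
    · right
      have hcomm' : ∀ x ∈ L, ∀ y, y ∈ M → y ∈ K → Commute x y := by
        intro x hx y hyM hyK
        have := hcomm ⟨x, hLK hx⟩ (Subgroup.mem_subgroupOf.2 hx)
          ⟨y, hyK⟩ (Subgroup.mem_subgroupOf.2 hyM)
        exact Subtype.ext_iff.1 this
      have hLMK : ⁅L, M⁆ ≤ M ⊓ K := by
        rw [Subgroup.commutator_le]
        intro g1 hg1 g2 hg2
        rw [Subgroup.mem_inf]
        constructor
        · have : ⁅g1, g2⁆ = (g1 * g2 * g1⁻¹) * g2⁻¹ := by group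
          rw [this]
          exact mul_mem (hM.conj_mem g2 hg2 g1) (inv_mem hg2)
        · have : ⁅g1, g2⁆ = g1 * (g2 * g1⁻¹ * g2⁻¹) := by group
          rw [this]
          exact mul_mem (hLK hg1) (hKnormal.conj_mem g1⁻¹ (inv_mem (hLK hg1)) g2)
      have h1 : ⁅(⁅L, M⁆), L⁆ = ⊥ := by
        rw [Subgroup.commutator_eq_bot_iff_le_centralizer]
        refine le_trans hLMK ?_
        intro y hy
        rw [Subgroup.mem_centralizer_iff]
        intro h hh
        exact (hcomm' h hh y hy.1 hy.2).eq
      have h2 : ⁅(⁅M, L⁆), L⁆ = ⊥ := by rw [Subgroup.commutator_comm M L]; exact h1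
      have h3 := Subgroup.commutator_commutator_eq_bot_of_rotate h1 h2
      rw [commutator_self_of_quasi hQS.1] at h3
      have := Subgroup.commutator_eq_bot_iff_le_centralizer.1 h3
      intro x hx y hy
      exact Commute.symm (Subgroup.mem_centralizer_iff.1 (this hx) y hy)

/-- Lemma A : a component is contained in, or centralizes, any normal subgroup. -/
lemma IsComponent.le_or_commute {L M : Subgroup G} (hL : IsComponent L) (hM : M.Normal) :
    L ≤ M ∨ ∀ x ∈ L, ∀ y ∈ M, Commute x y := by
  obtain ⟨⟨n, c, hc0, hcn, hstep⟩, hQS⟩ := hL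
  exact component_core n G L M c hc0 hcn hstep hQS hM

end Chunk3
section Chunk4
variable {G : Type*} [Group G]

lemma mem_frattini_iff {x : G} : x ∈ frattini G ↔ ∀ M : Subgroup G, IsCoatom M → x ∈ M := by
  show x ∈ ⨅ a ∈ {H : Subgroup G | IsCoatom H}, a ↔ _
  simp only [Subgroup.mem_iInf, Set.mem_setOf_eq]

lemma map_subtype_commutator (C : Subgroup G) :
    Subgroup.map C.subtype (commutator ↥C) = ⁅C, C⁆ := by
  rw [_root_.commutator_def, Subgroup.map_commutator]
  congr 1 <;> rw [← MonoidHom.range_eq_map, Subgroup.range_subtype]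

lemma frattini_map_subtype_le_s9 [Finite G] (N : Subgroup G) (hN : N.Normal) :
    (frattini ↥N).map N.subtype ≤ frattini G := by
  haveI := hN
  set P := (frattini ↥N).map N.subtype with hPdef
  haveI hPn : P.Normal := inferInstance
  intro x hx
  rw [mem_frattini_iff]
  intro M hM
  by_contra hxM
  have hPM : ¬ P ≤ M := fun h => hxM (h hx)
  have htop : M ⊔ P = ⊤ := hM.2 _ (left_lt_sup.2 hPM)
  haveI : Finite (Subgroup ↥N) := Finite.of_injective _ (SetLike.coe_injective (A := Subgroup ↥N))
  have key : (M ⊓ N).subgroupOf N ⊔ frattini ↥N = ⊤ := by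
    rw [eq_top_iff]
    rintro ⟨y, hyN⟩ _
    have hy : y ∈ P ⊔ M := by rw [sup_comm] at htop; rw [htop]; exact Subgroup.mem_top y
    rw [← SetLike.mem_coe, Subgroup.normal_mul] at hy
    obtain ⟨p, hp, m, hm, hpm⟩ := hy
    have hpN : p ∈ N := Subgroup.map_subtype_le _ hp
    have hmN : m ∈ N := by
      have hme : m = p⁻¹ * y := by rw [← hpm]; group
      rw [hme]; exact mul_mem (inv_mem hpN) hyN
    have heq : (⟨y, hyN⟩ : ↥N) = ⟨p, hpN⟩ * ⟨m, hmN⟩ := Subtype.ext (by simp [hpm])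
    rw [heq]
    apply mul_mem
    · apply le_sup_right (α := Subgroup ↥N)
      obtain ⟨p', hp', e⟩ := hp
      exact (Subtype.ext e.symm : (⟨p, hpN⟩ : ↥N) = p') ▸ hp'
    · exact le_sup_left (α := Subgroup ↥N)
        (Subgroup.mem_subgroupOf.2 (Subgroup.mem_inf.2 ⟨hm, hmN⟩))
  have hMN := frattini_nongenerating key
  rw [Subgroup.subgroupOf_eq_top] at hMN
  exact hPM (le_trans (Subgroup.map_subtype_le _) (le_trans hMN inf_le_left))

lemma commutator_le_frattini_of_nilpotent (H : Type*) [Group H] [Finite H]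
    [hn : Group.IsNilpotent H] : commutator H ≤ frattini H := by
  intro x hx
  rw [mem_frattini_iff]
  intro M hM
  have htfae := (isNilpotent_of_finite_tfae (G := H)).out 0 2
  haveI hMn : M.Normal := (htfae.mp hn) M hM
  have hsub : ∀ S : Subgroup (H ⧸ M), S = ⊥ ∨ S = ⊤ := by
    intro S
    have hMle : M ≤ S.comap (QuotientGroup.mk' M) := by
      intro m hm
      have h1 : (QuotientGroup.mk' M) m = 1 := (QuotientGroup.eq_one_iff m).2 hm
      show (QuotientGroup.mk' M) m ∈ S
      rw [h1]; exact S.one_mem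
    have hmc := Subgroup.map_comap_eq_self_of_surjective
      (f := QuotientGroup.mk' M) (QuotientGroup.mk'_surjective M) S
    rcases eq_or_lt_of_le hMle with he | hlt
    · left
      rw [← hmc, ← he, eq_bot_iff]
      rintro y ⟨m, hm, rfl⟩
      rw [Subgroup.mem_bot]
      exact (QuotientGroup.eq_one_iff m).2 hm
    · right
      rw [← hmc, hM.2 _ hlt]
      exact Subgroup.map_top_of_surjective _ (QuotientGroup.mk'_surjective M)
  have hcomm : ∀ a b : H ⧸ M, Commute a b := by
    intro a b
    rcases hsub (Subgroup.zpowers a) with hz | hz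
    · have ha : a ∈ Subgroup.zpowers a := Subgroup.mem_zpowers a
      rw [hz, Subgroup.mem_bot] at ha
      rw [ha]; exact Commute.one_left b
    · have hb : b ∈ Subgroup.zpowers a := by rw [hz]; exact Subgroup.mem_top b
      obtain ⟨k, rfl⟩ := Subgroup.mem_zpowers_iff.1 hb
      exact (Commute.refl a).zpow_right k
  have hle : commutator H ≤ M := by
    rw [_root_.commutator_def, Subgroup.commutator_le]
    intro g1 _ g2 _
    rw [← QuotientGroup.eq_one_iff]
    have he : ((⁅g1, g2⁆ : H) : H ⧸ M) = ⁅(g1 : H ⧸ M), (g2 : H ⧸ M)⁆ :=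
      map_commutatorElement (QuotientGroup.mk' M) g1 g2
    rw [he]
    exact commutatorElement_eq_one_iff_commute.2 (hcomm _ _)
  exact hle hx

lemma isNilpotent_of_commute {H : Type*} [Group H] (h : ∀ a b : H, Commute a b) :
    Group.IsNilpotent H := by
  letI : CommGroup H := { ‹Group H› with mul_comm := fun a b => (h a b).eq }
  infer_instance

lemma comm_of_nilpotent_normal [Finite G] (hG : frattini G = ⊥) {M : Subgroup G}
    (hM : M.Normal) (hn : Group.IsNilpotent ↥M) : ∀ x ∈ M, ∀ y ∈ M, Commute x y := by
  haveI := hn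
  have h1 : commutator ↥M ≤ frattini ↥M := commutator_le_frattini_of_nilpotent ↥M
  have h2 : frattini ↥M = ⊥ := by
    have h3 := frattini_map_subtype_le_s9 M hM
    rw [hG, le_bot_iff, Subgroup.map_eq_bot_iff, Subgroup.ker_subtype, le_bot_iff] at h3
    exact h3
  rw [h2, le_bot_iff] at h1
  intro x hx y hy
  have hc : ⁅(⟨x, hx⟩ : ↥M), (⟨y, hy⟩ : ↥M)⁆ = 1 := by
    have hmem : ⁅(⟨x, hx⟩ : ↥M), (⟨y, hy⟩ : ↥M)⁆ ∈ commutator ↥M := by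
      rw [_root_.commutator_def]
      exact Subgroup.commutator_mem_commutator (Subgroup.mem_top _) (Subgroup.mem_top _)
    rw [h1, Subgroup.mem_bot] at hmem
    exact hmem
  have := commutatorElement_eq_one_iff_commute.1 hc
  exact Subtype.ext_iff.1 this.eq

lemma isNilpotent_sup_of_comm {A B : Subgroup G} (hA : A.Normal) (hB : B.Normal)
    (hcA : ∀ x ∈ A, ∀ y ∈ A, Commute x y) (hcB : ∀ x ∈ B, ∀ y ∈ B, Commute x y) :
    Group.IsNilpotent ↥(A ⊔ B) := by
  haveI := hA; haveI := hB
  have hmem : ∀ w ∈ A ⊔ B, ∃ a ∈ A, ∃ b ∈ B, a * b = w := by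
    intro w hw
    rw [← SetLike.mem_coe, Subgroup.mul_normal A B] at hw
    exact hw
  have hCA : ⁅A ⊔ B, A ⊔ B⁆ ≤ A := by
    rw [Subgroup.commutator_le]
    intro g1 hg1 g2 hg2
    obtain ⟨a1, ha1, b1, hb1, rfl⟩ := hmem g1 hg1
    obtain ⟨a2, ha2, b2, hb2, rfl⟩ := hmem g2 hg2
    rw [← QuotientGroup.eq_one_iff]
    show (QuotientGroup.mk' A) ⁅a1 * b1, a2 * b2⁆ = 1
    rw [map_commutatorElement, map_mul, map_mul]
    have e1 : (QuotientGroup.mk' A) a1 = 1 := (QuotientGroup.eq_one_iff a1).2 ha1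
    have e2 : (QuotientGroup.mk' A) a2 = 1 := (QuotientGroup.eq_one_iff a2).2 ha2
    rw [e1, e2, one_mul, one_mul, ← map_commutatorElement,
      (hcB b1 hb1 b2 hb2).commutator_eq, map_one]
  have hCB : ⁅A ⊔ B, A ⊔ B⁆ ≤ B := by
    rw [Subgroup.commutator_le]
    intro g1 hg1 g2 hg2
    obtain ⟨a1, ha1, b1, hb1, rfl⟩ := hmem g1 hg1
    obtain ⟨a2, ha2, b2, hb2, rfl⟩ := hmem g2 hg2
    rw [← QuotientGroup.eq_one_iff]
    show (QuotientGroup.mk' B) ⁅a1 * b1, a2 * b2⁆ = 1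
    rw [map_commutatorElement, map_mul, map_mul]
    have e1 : (QuotientGroup.mk' B) b1 = 1 := (QuotientGroup.eq_one_iff b1).2 hb1
    have e2 : (QuotientGroup.mk' B) b2 = 1 := (QuotientGroup.eq_one_iff b2).2 hb2
    rw [e1, e2, mul_one, mul_one, ← map_commutatorElement,
      (hcA a1 ha1 a2 ha2).commutator_eq, map_one]
  set C := A ⊔ B with hCdef
  have hZ : commutator ↥C ≤ Subgroup.center ↥C := by
    intro q hq
    have hqC : (q : G) ∈ ⁅C, C⁆ := by
      rw [← _root_.map_subtype_commutator]
      exact Subgroup.mem_map_of_mem _ hq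
    have hqA : (q : G) ∈ A := hCA hqC
    have hqB : (q : G) ∈ B := hCB hqC
    rw [Subgroup.mem_center_iff]
    intro g
    obtain ⟨a, ha, b, hb, he⟩ := hmem (g : G) (SetLike.coe_mem g)
    have hcq : Commute ((q : G)) ((g : G)) :=
      he ▸ ((hcA _ hqA a ha).mul_right (hcB _ hqB b hb))
    exact Subtype.ext (by
      rw [Subgroup.coe_mul, Subgroup.coe_mul]
      exact hcq.symm.eq)
  have hqcomm : ∀ a b : (↥C ⧸ Subgroup.center ↥C), Commute a b := by
    intro a b
    obtain ⟨x, rfl⟩ := QuotientGroup.mk_surjective a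
    obtain ⟨y, rfl⟩ := QuotientGroup.mk_surjective b
    rw [← commutatorElement_eq_one_iff_commute]
    show ⁅(QuotientGroup.mk' (Subgroup.center ↥C)) x,
      (QuotientGroup.mk' (Subgroup.center ↥C)) y⁆ = 1
    rw [← map_commutatorElement]
    refine (QuotientGroup.eq_one_iff _).2 (hZ ?_)
    rw [_root_.commutator_def]
    exact Subgroup.commutator_mem_commutator (Subgroup.mem_top _) (Subgroup.mem_top _)
  exact of_quotient_center_nilpotent (isNilpotent_of_commute hqcomm)

lemma fitting_comm' (H : Type*) [Group H] [Finite H] (hH : frattini H = ⊥) :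
    ∀ x ∈ fitting H, ∀ y ∈ fitting H, Commute x y := by
  set D : Set (Subgroup H) := {M | M.Normal ∧ ∀ x ∈ M, ∀ y ∈ M, Commute x y} with hD
  have hdir : DirectedOn (· ≤ ·) D := by
    rintro M1 ⟨h1n, h1c⟩ M2 ⟨h2n, h2c⟩
    refine ⟨M1 ⊔ M2, ⟨?_, ?_⟩, le_sup_left, le_sup_right⟩
    · haveI := h1n; haveI := h2n; infer_instance
    · haveI := h1n; haveI := h2n
      exact comm_of_nilpotent_normal hH inferInstance (isNilpotent_sup_of_comm h1n h2n h1c h2c)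
  have hne : D.Nonempty := ⟨⊥, inferInstance, by
    intro x hx y hy
    rw [Subgroup.mem_bot] at hx
    rw [hx]; exact Commute.one_left y⟩
  have hmemT : ∀ x ∈ sSup D, ∃ M ∈ D, x ∈ M :=
    fun x hx => (Subgroup.mem_sSup_of_directedOn hne hdir).1 hx
  have hTn : (sSup D).Normal := by
    constructor; intro x hx g
    obtain ⟨M, hMD, hxM⟩ := hmemT x hx
    exact le_sSup hMD (hMD.1.conj_mem x hxM g)
  have hfit : fitting H ≤ sSup D := by
    haveI := hTn
    apply Subgroup.normalClosure_le_normal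
    rintro x ⟨M, hMn, hMnil, hxM⟩
    exact le_sSup (show M ∈ D from ⟨hMn, comm_of_nilpotent_normal hH hMn hMnil⟩) hxM
  intro x hx y hy
  obtain ⟨M1, h1, hx1⟩ := hmemT x (hfit hx)
  obtain ⟨M2, h2, hy2⟩ := hmemT y (hfit hy)
  obtain ⟨M3, h3, le1, le2⟩ := hdir M1 h1 M2 h2
  exact h3.2 x (le1 hx1) y (le2 hy2)

end Chunk4
section Chunk5
variable {G : Type*} [Group G]

/-- a component cannot be elementwise abelian. -/
lemma IsComponent.not_abelian {L : Subgroup G} (hc : IsComponent L)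
    (habel : ∀ x ∈ L, ∀ y ∈ L, Commute x y) : False := by
  have hcent : Subgroup.center ↥L = ⊤ := by
    rw [eq_top_iff]
    intro a _
    rw [Subgroup.mem_center_iff]
    intro g
    exact Subtype.ext ((habel _ (SetLike.coe_mem g) _ (SetLike.coe_mem a)).eq)
  haveI := hc.2.2
  haveI : Subsingleton (↥L ⧸ Subgroup.center ↥L) := by
    rw [hcent]
    exact QuotientGroup.subsingleton_quotient_top
  exact not_subsingleton_iff_nontrivial.2 (hc.2.2.toNontrivial) this

/-- components commute elementwise with any abelian normal subgroup. -/
lemma IsComponent.commute_of_normal_abelian {L M : Subgroup G} (hL : IsComponent L)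
    (hM : M.Normal) (hab : ∀ x ∈ M, ∀ y ∈ M, Commute x y) :
    ∀ x ∈ L, ∀ y ∈ M, Commute x y := by
  rcases hL.le_or_commute hM with hle | h
  · exact absurd (fun x hx y hy => hab x (hle hx) y (hle hy)) (fun h => hL.not_abelian h)
  · exact h

end Chunk5



/-- If `Φ(G) = 1` and `N ⊴ G` with `N ≤ F*(G)`, then `N = F(N) × E(N)` and
`F(N) = Z(N)`. -/
theorem stmt_9 (G : Type*) [Group G] [Finite G] (hG : frattini G = ⊥)
    (N : Subgroup G) (hN : N.Normal) (hle : N ≤ genFitting G) :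
    fitting N ⊔ layer N = ⊤ ∧ fitting N ⊓ layer N = ⊥ ∧
      (∀ x ∈ fitting N, ∀ y ∈ layer N, Commute x y) ∧
      fitting N = Subgroup.center N := by
  classical
  haveI := hN
  -- Frattini subgroup of N is trivial (Gaschütz)
  have hFrN : frattini ↥N = ⊥ := by
    have h3 := frattini_map_subtype_le_s9 N hN
    rw [hG, le_bot_iff, Subgroup.map_eq_bot_iff, Subgroup.ker_subtype, le_bot_iff] at h3
    exact h3
  -- the Fitting subgroup of N is elementwise abelian
  have hfitab : ∀ x ∈ fitting ↥N, ∀ y ∈ fitting ↥N, Commute x y := fitting_comm' ↥N hFrN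
  haveI hfitn : (fitting ↥N).Normal := Subgroup.normalClosure_normal
  -- GOAL 3 : fitting N commutes with layer N
  have goal3 : ∀ x ∈ fitting ↥N, ∀ y ∈ layer ↥N, Commute x y := by
    intro x hx y hy
    have hcen : layer ↥N ≤ Subgroup.centralizer {x} := by
      rw [layer]
      refine (Subgroup.closure_le _).2 ?_
      rintro w ⟨Q, hQ, hwQ⟩
      rw [SetLike.mem_coe, Subgroup.mem_centralizer_iff]
      rintro h hh
      rw [Set.mem_singleton_iff] at hh
      rw [hh]
      exact (hQ.commute_of_normal_abelian hfitn hfitab w hwQ x hx).symm.eq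
    exact Subgroup.mem_centralizer_iff.1 (hcen hy) x (Set.mem_singleton x)
  -- global facts in G
  have hGfit_ab : ∀ x ∈ fitting G, ∀ y ∈ fitting G, Commute x y := fitting_comm' G hG
  haveI hGfitn : (fitting G).Normal := Subgroup.normalClosure_normal
  have hcompF : ∀ L : Subgroup G, IsComponent L → ∀ x ∈ L, ∀ y ∈ fitting G, Commute x y :=
    fun L hL => hL.commute_of_normal_abelian hGfitn hGfit_ab
  have hcompN : ∀ L : Subgroup G, IsComponent L → ¬ L ≤ N → ∀ x ∈ L, ∀ y ∈ N, Commute x y :=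
    fun L hL hnle => (hL.le_or_commute hN).resolve_left hnle
  set E0 : Subgroup G := sSup {L | IsComponent L ∧ L ≤ N} with hE0def
  set E1 : Subgroup G := sSup {L | IsComponent L ∧ ¬ L ≤ N} with hE1def
  set Y : Subgroup G := fitting G ⊔ E1 with hYdef
  have hE0N : E0 ≤ N := sSup_le (fun L hL => hL.2)
  have hNleYE : N ≤ Y ⊔ E0 := by
    refine le_trans hle ?_
    rw [genFitting]
    apply sup_le
    · exact le_trans le_sup_left le_sup_left
    · rw [layer]
      refine (Subgroup.closure_le _).2 ?_
      rintro x ⟨Q, hQ, hxQ⟩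
      rw [SetLike.mem_coe]
      by_cases hQN : Q ≤ N
      · exact (le_sup_right : E0 ≤ Y ⊔ E0)
          (le_sSup (show Q ∈ {L | IsComponent L ∧ L ≤ N} from ⟨hQ, hQN⟩) hxQ)
      · exact (le_sup_left : Y ≤ Y ⊔ E0) ((le_sup_right : E1 ≤ Y)
          (le_sSup (show Q ∈ {L | IsComponent L ∧ ¬ L ≤ N} from ⟨hQ, hQN⟩) hxQ))
  -- F(G) commutes with all of F*(G)
  have hFC : genFitting G ≤ Subgroup.centralizer (fitting G) := by
    rw [genFitting]
    apply sup_le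
    · intro w hw
      rw [Subgroup.mem_centralizer_iff]
      intro f hf
      exact (hGfit_ab f hf w hw).eq
    · rw [layer]
      refine (Subgroup.closure_le _).2 ?_
      rintro w ⟨Q, hQ, hwQ⟩
      rw [SetLike.mem_coe, Subgroup.mem_centralizer_iff]
      intro f hf
      exact (hcompF Q hQ w hwQ f hf).symm.eq
  have hNF : ∀ n ∈ N, ∀ f ∈ fitting G, Commute n f := by
    intro n hn f hf
    exact ((Subgroup.mem_centralizer_iff.1 (hFC (hle hn)) f hf) : Commute f n).symm
  -- N commutes with Y
  have hNY : ∀ n ∈ N, ∀ y ∈ Y, Commute n y := by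
    intro n hn
    have hYc : Y ≤ Subgroup.centralizer {n} := by
      apply sup_le
      · intro f hf
        rw [Subgroup.mem_centralizer_iff]
        intro h hh
        rw [Set.mem_singleton_iff] at hh
        rw [hh]
        exact (hNF n hn f hf).eq
      · apply sSup_le
        rintro L ⟨hL, hLN⟩ x hx
        rw [Subgroup.mem_centralizer_iff]
        intro h hh
        rw [Set.mem_singleton_iff] at hh
        rw [hh]
        exact ((hcompN L hL hLN x hx n hn).symm).eq
    intro y hy
    exact (Subgroup.mem_centralizer_iff.1 (hYc hy) n (Set.mem_singleton n))
  have hYE0 : ∀ x ∈ Y, ∀ e ∈ E0, Commute x e :=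
    fun x hx e he => (hNY e (hE0N he) x hx).symm
  -- N normalizes Y
  have hConjY : ∀ g ∈ N, ∀ x ∈ Y, g * x * g⁻¹ ∈ Y := by
    intro g hg
    have : Y ≤ Y.comap (MulAut.conj g).toMonoidHom := by
      apply sup_le
      · intro f hf
        rw [Subgroup.mem_comap]
        show MulAut.conj g f ∈ Y
        rw [MulAut.conj_apply]
        exact (le_sup_left : fitting G ≤ Y) (hGfitn.conj_mem f hf g)
      · apply sSup_le
        rintro L ⟨hL, hLN⟩ x hx
        rw [Subgroup.mem_comap]
        show MulAut.conj g x ∈ Y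
        rw [MulAut.conj_apply]
        have hxg : g * x * g⁻¹ = x := by
          rw [(hcompN L hL hLN x hx g hg).symm.eq]
          group
        rw [hxg]
        exact (le_sup_right : E1 ≤ Y)
          (le_sSup (show L ∈ {L | IsComponent L ∧ ¬ L ≤ N} from ⟨hL, hLN⟩) hx)
    intro x hx
    exact this hx
  -- the abelian normal piece
  set A : Subgroup G := N ⊓ Y ⊓ Subgroup.centralizer Y with hAdef
  have hAN : A ≤ N := le_trans inf_le_left inf_le_left
  have hAab : ∀ a ∈ A, ∀ b ∈ A, Commute a b := by
    intro a ha b hb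
    exact ((Subgroup.mem_centralizer_iff.1 ha.2 b hb.1.2) : Commute b a).symm
  have hAnorm : (A.subgroupOf N).Normal := by
    apply normal_subgroupOf_mk
    intro x g hx hxN hgN
    refine Subgroup.mem_inf.2 ⟨Subgroup.mem_inf.2 ⟨?_, ?_⟩, ?_⟩
    · exact hN.conj_mem x hxN g
    · exact hConjY g hgN x hx.1.2
    · rw [Subgroup.mem_centralizer_iff]
      intro h hh
      have ht' : g⁻¹ * h * g ∈ Y := by
        have := hConjY g⁻¹ (inv_mem hgN) h hh
        rwa [inv_inv] at this
      have hcx := Subgroup.mem_centralizer_iff.1 hx.2 _ ht'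
      calc h * (g * x * g⁻¹) = g * ((g⁻¹ * h * g) * x) * g⁻¹ := by group
        _ = g * (x * (g⁻¹ * h * g)) * g⁻¹ := by rw [hcx]
        _ = (g * x * g⁻¹) * h := by group
  have hAnil : Group.IsNilpotent ↥(A.subgroupOf N) := by
    apply isNilpotent_of_commute
    intro u v
    apply Subtype.ext
    apply Subtype.ext
    push_cast
    exact (hAab _ (Subgroup.mem_subgroupOf.1 u.2) _ (Subgroup.mem_subgroupOf.1 v.2)).eq
  -- image of E0 inside layer N
  have hE0layer : E0 ≤ (layer ↥N).map N.subtype := by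
    apply sSup_le
    rintro L ⟨hL, hLN⟩ x hx
    refine ⟨⟨x, hLN hx⟩, ?_, rfl⟩
    apply Subgroup.subset_closure
    exact ⟨L.subgroupOf N, hL.subgroupOf hLN, Subgroup.mem_subgroupOf.2 hx⟩
  -- GOAL 1
  have goal1 : fitting ↥N ⊔ layer ↥N = ⊤ := by
    rw [eq_top_iff]
    rintro ⟨n, hn⟩ _
    obtain ⟨y, hy, e, heE0, hye⟩ := mem_sup_of_commute hYE0 (hNleYE hn)
    have heN : e ∈ N := hE0N heE0
    have hyN : y ∈ N := by
      have : y = n * e⁻¹ := by rw [hye]; group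
      rw [this]; exact mul_mem hn (inv_mem heN)
    have hyA : y ∈ A := by
      refine Subgroup.mem_inf.2 ⟨Subgroup.mem_inf.2 ⟨hyN, hy⟩, ?_⟩
      rw [Subgroup.mem_centralizer_iff]
      intro h hh
      exact (hNY y hyN h hh).symm.eq
    have hyfit : (⟨y, hyN⟩ : ↥N) ∈ fitting ↥N := by
      apply Subgroup.subset_normalClosure
      exact ⟨A.subgroupOf N, hAnorm, hAnil, Subgroup.mem_subgroupOf.2 hyA⟩
    obtain ⟨e', he', hee⟩ := hE0layer heE0
    have : (⟨n, hn⟩ : ↥N) = ⟨y, hyN⟩ * e' := by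
      apply Subtype.ext
      show n = y * ↑e'
      rw [hye, ← hee]
      rfl
    rw [this]
    exact mul_mem ((le_sup_left : fitting ↥N ≤ fitting ↥N ⊔ layer ↥N) hyfit)
      ((le_sup_right : layer ↥N ≤ fitting ↥N ⊔ layer ↥N) he')
  -- GOAL 4
  have goal4 : fitting ↥N = Subgroup.center ↥N := by
    apply le_antisymm
    · intro x hx
      rw [Subgroup.mem_center_iff]
      intro g
      have hg : g ∈ fitting ↥N ⊔ layer ↥N := by rw [goal1]; trivial
      obtain ⟨u, hu, v, hv, rfl⟩ := mem_sup_of_commute goal3 hg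
      exact ((hfitab x hx u hu).mul_right (goal3 x hx v hv)).symm.eq
    · intro x hx
      apply Subgroup.subset_normalClosure
      refine ⟨Subgroup.center ↥N, inferInstance, ?_, hx⟩
      apply isNilpotent_of_commute
      intro u v
      apply Subtype.ext
      push_cast
      exact Subgroup.mem_center_iff.1 v.2 ↑u
  -- perfection of the layer
  have hperf : ⁅layer ↥N, layer ↥N⁆ = layer ↥N := by
    apply le_antisymm
    · refine Subgroup.commutator_le.2 (fun a ha b hb => ?_)
      rw [commutatorElement_def]
      exact mul_mem (mul_mem (mul_mem ha hb) (inv_mem ha)) (inv_mem hb)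
    · rw [layer]
      refine (Subgroup.closure_le _).2 ?_
      rintro x ⟨Q, hQ, hxQ⟩
      have hQle : Q ≤ layer ↥N := fun w hw => Subgroup.subset_closure ⟨Q, hQ, hw⟩
      have hmono := Subgroup.commutator_mono hQle hQle
      rw [commutator_self_of_quasi hQ.2.1] at hmono
      exact hmono hxQ
  -- the layer is normal in N
  haveI hlayer_norm : (layer ↥N).Normal := by
    constructor
    intro x hx g
    have hmap : (layer ↥N).map (MulAut.conj g).toMonoidHom ≤ layer ↥N := by
      rw [layer, MonoidHom.map_closure]
      refine (Subgroup.closure_le _).2 ?_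
      rintro w ⟨x', ⟨Q, hQ, hx'Q⟩, rfl⟩
      apply Subgroup.subset_closure
      exact ⟨Q.map (MulAut.conj g).toMonoidHom, hQ.map_conj g,
        Subgroup.mem_map_of_mem _ hx'Q⟩
    exact hmap (Subgroup.mem_map_of_mem _ hx)
  -- GOAL 2
  have hfrE : frattini ↥(layer ↥N) = ⊥ := by
    have h3 := frattini_map_subtype_le_s9 (layer ↥N) hlayer_norm
    rw [hFrN, le_bot_iff, Subgroup.map_eq_bot_iff, Subgroup.ker_subtype, le_bot_iff] at h3
    exact h3
  have goal2 : fitting ↥N ⊓ layer ↥N = ⊥ := by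
    rw [eq_bot_iff]
    intro z hz
    rw [Subgroup.mem_inf] at hz
    have hzc : ∀ w : ↥N, Commute z w := by
      intro w
      have hw : w ∈ fitting ↥N ⊔ layer ↥N := by rw [goal1]; trivial
      obtain ⟨u, hu, v, hv, rfl⟩ := mem_sup_of_commute goal3 hw
      exact (hfitab z hz.1 u hu).mul_right (goal3 z hz.1 v hv)
    set E := layer ↥N with hEdef
    set zE : ↥E := ⟨z, hz.2⟩ with hzEdef
    have hzcE : ∀ w : ↥E, Commute zE w := by
      intro w
      apply Subtype.ext
      push_cast
      exact (hzc ↑w).eq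
    have hzE : zE ∈ frattini ↥E := by
      rw [mem_frattini_iff]
      intro M hM
      by_contra hzM
      have hlt : M < M ⊔ Subgroup.zpowers zE :=
        left_lt_sup.2 (fun hc => hzM (hc (Subgroup.mem_zpowers _)))
      have h1 : M ⊔ Subgroup.zpowers zE = ⊤ := hM.2 _ hlt
      have hcommE : ∀ x ∈ M, ∀ y ∈ Subgroup.zpowers zE, Commute x y := by
        intro x _ y hy
        obtain ⟨k, rfl⟩ := Subgroup.mem_zpowers_iff.1 hy
        exact ((hzcE x).zpow_left k).symm
      have hzpc : ∀ y ∈ Subgroup.zpowers zE, y ∈ Subgroup.center ↥E := by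
        intro y hy
        obtain ⟨k, rfl⟩ := Subgroup.mem_zpowers_iff.1 hy
        rw [Subgroup.mem_center_iff]
        intro g
        exact ((hzcE g).zpow_left k).symm.eq
      have hEM : commutator ↥E ≤ M := by
        rw [_root_.commutator_def, Subgroup.commutator_le]
        intro g1 _ g2 _
        obtain ⟨m1, hm1, z1, hz1, rfl⟩ :=
          mem_sup_of_commute hcommE (h1 ▸ Subgroup.mem_top g1)
        obtain ⟨m2, hm2, z2, hz2, rfl⟩ :=
          mem_sup_of_commute hcommE (h1 ▸ Subgroup.mem_top g2)
        rw [commutatorElement_central_both m1 m2 z1 z2 (hzpc z1 hz1) (hzpc z2 hz2),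
          commutatorElement_def]
        exact mul_mem (mul_mem (mul_mem hm1 hm2) (inv_mem hm1)) (inv_mem hm2)
      have hEtop : commutator ↥E = ⊤ := by
        have h4 := _root_.map_subtype_commutator E
        rw [hperf] at h4
        have h5 : Subgroup.map E.subtype (⊤ : Subgroup ↥E) = E := by
          rw [← MonoidHom.range_eq_map, Subgroup.range_subtype]
        exact Subgroup.map_injective (Subgroup.subtype_injective E) (h4.trans h5.symm)
      rw [hEtop] at hEM
      exact hM.1 (top_le_iff.1 hEM)
    rw [hfrE, Subgroup.mem_bot] at hzE
    rw [Subgroup.mem_bot]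
    exact Subtype.ext_iff.1 hzE
  exact ⟨goal1, goal2, goal3, goal4⟩
end

section
/- Let N be a central subgroup of a finite group G with Φ(N) = 1. Then Φ(G/N) = Φ(G)N/N. -/
open Subgroup

/-- map of a coatom containing the kernel under a surjective hom is a coatom. -/
lemma aux_isCoatom_map {G H : Type*} [Group G] [Group H] {f : G →* H}
    (hf : Function.Surjective f) {K : Subgroup G} (hK : IsCoatom K) (hker : f.ker ≤ K) :
    IsCoatom (K.map f) := by
  have hcm : comap f (map f K) = K := by
    rw [Subgroup.comap_map_eq, sup_eq_left.2 hker]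
  constructor
  · intro htop
    apply hK.1
    rw [← hcm, htop, Subgroup.comap_top]
  · intro B hB
    have h1 : K < comap f B := by
      refine lt_of_le_of_ne (hcm ▸ Subgroup.comap_mono hB.le) ?_
      intro h
      have := Subgroup.map_comap_eq_self_of_surjective hf B
      rw [← h] at this
      exact hB.ne this
    have := hK.2 _ h1
    rw [← Subgroup.map_comap_eq_self_of_surjective hf B, this]
    exact Subgroup.map_top_of_surjective f hf

/-- facts about a maximal subgroup not containing a central subgroup -/
lemma aux_bad_facts {G : Type*} [Group G] [Finite G] {N M : Subgroup G}
    (hc : N ≤ Subgroup.center G) (hM : IsCoatom M) (hnle : ¬ N ≤ M) :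
    M.Normal ∧ (∀ a b : G, a * b * a⁻¹ * b⁻¹ ∈ M) ∧
      (∀ (x : G) (q : ℕ), Nat.Prime q → x ^ (q * q) ∈ M → x ^ q ∈ M) := by
  obtain ⟨n, hnN, hnM⟩ := SetLike.not_le_iff_exists.mp hnle
  have hnn : n ∈ normalizer (M : Set G) := by
    rw [Subgroup.mem_normalizer_iff]
    intro h
    have hcent := Subgroup.mem_center_iff.mp (hc hnN)
    rw [show n * h * n⁻¹ = h by rw [← hcent h]; group]
  have hnorm : normalizer (M : Set G) = ⊤ := by
    apply hM.2
    exact lt_of_le_of_ne Subgroup.le_normalizer (fun h => hnM (h ▸ hnn))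
  haveI hMn : M.Normal := Subgroup.normalizer_eq_top_iff.mp hnorm
  set π := QuotientGroup.mk' M with hπ
  have hπs : Function.Surjective π := QuotientGroup.mk'_surjective M
  have hsimp : ∀ H : Subgroup (G ⧸ M), H = ⊥ ∨ H = ⊤ := by
    intro H
    have h1 : M ≤ comap π H := by
      intro x hx
      have h0 : π x = 1 := (QuotientGroup.eq_one_iff x).2 hx
      rw [Subgroup.mem_comap, h0]
      exact H.one_mem
    rcases h1.lt_or_eq with h2 | h2
    · right
      have := hM.2 _ h2
      rw [← Subgroup.map_comap_eq_self_of_surjective hπs H, this]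
      exact Subgroup.map_top_of_surjective π hπs
    · left
      rw [← Subgroup.map_comap_eq_self_of_surjective hπs H, ← h2]
      rw [eq_bot_iff]
      rintro _ ⟨m, hm, rfl⟩
      simp only [Subgroup.mem_bot]
      exact (QuotientGroup.eq_one_iff m).2 hm
  haveI hnontriv : Nontrivial (G ⧸ M) :=
    ⟨⟨π n, 1, fun h => hnM ((QuotientGroup.eq_one_iff n).1 h)⟩⟩
  haveI hcyc : IsCyclic (G ⧸ M) := by
    obtain ⟨g, hg⟩ := exists_ne (1 : G ⧸ M)
    have : Subgroup.zpowers g = ⊤ :=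
      (hsimp (Subgroup.zpowers g)).resolve_left (Subgroup.zpowers_ne_bot.2 hg)
    exact ⟨⟨g, (Subgroup.eq_top_iff' _).1 this⟩⟩
  letI : CommGroup (G ⧸ M) := IsCyclic.commGroup
  haveI : IsSimpleGroup (G ⧸ M) := ⟨fun H _ => hsimp H⟩
  have hp : (Nat.card (G ⧸ M)).Prime := IsSimpleGroup.prime_card
  refine ⟨hMn, ?_, ?_⟩
  · intro a b
    have h0 : π (a * b * a⁻¹ * b⁻¹) = 1 := by
      rw [map_mul, map_mul, map_mul, map_inv, map_inv, mul_comm (π a) (π b)]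
      group
    exact (QuotientGroup.eq_one_iff _).1 h0
  · intro x q hq hx
    set y := π x with hy
    have h1 : y ^ (q * q) = 1 := by
      rw [← map_pow]
      exact (QuotientGroup.eq_one_iff _).2 hx
    have h2 : orderOf y ∣ q * q := orderOf_dvd_of_pow_eq_one h1
    have h3 : orderOf y ∣ Nat.card (G ⧸ M) := orderOf_dvd_natCard y
    have h4 : y ^ q = 1 := by
      rcases (Nat.Prime.eq_one_or_self_of_dvd hp _ h3) with h5 | h5
      · rw [orderOf_eq_one_iff.1 h5, one_pow]
      · have h6 : Nat.card (G ⧸ M) ∣ q * q := h5 ▸ h2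
        have h7 : Nat.card (G ⧸ M) = q := by
          rcases (Nat.Prime.dvd_mul hp).1 h6 with h | h <;>
            exact (Nat.prime_dvd_prime_iff_eq hp hq).1 h
        rw [← orderOf_dvd_iff_pow_eq_one, h5, h7]
    have h8 : π (x ^ q) = 1 := by rw [map_pow]; exact h4
    exact (QuotientGroup.eq_one_iff _).1 h8

lemma aux_sub_eq {G : Type*} [Group G] [Finite G] (H K : Subgroup G) (h : H ≤ K)
    (hc : Nat.card K ≤ Nat.card H) : H = K :=
  SetLike.coe_injective <|
    Set.eq_of_subset_of_ncard_le h (by rw [← Nat.card_coe_set_eq, ← Nat.card_coe_set_eq]; exact hc) (Set.toFinite _)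

/-- If `N` is a `Φ`-free central subgroup of a finite group `G`, then
`Φ(G/N) = Φ(G)N/N`. -/
theorem stmt_11 (G : Type*) [Group G] [Finite G] (N : Subgroup G) [N.Normal]
    (hc : N ≤ Subgroup.center G) (hfree : frattini N = ⊥) :
    frattini (G ⧸ N) = (frattini G).map (QuotientGroup.mk' N) := by
  classical
  set f := QuotientGroup.mk' N with hfdef
  have hfs : Function.Surjective f := QuotientGroup.mk'_surjective N
  have hker : f.ker = N := QuotientGroup.ker_mk' N
  have hmapN : N.map f = ⊥ := (Subgroup.map_eq_bot_iff N).2 hker.ge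
  set T := (frattini (G ⧸ N)).comap f with hTdef
  have hNT : N ≤ T := by
    intro x hx
    have : f x = 1 := by rw [← MonoidHom.mem_ker, hker]; exact hx
    rw [hTdef, Subgroup.mem_comap, this]
    exact (frattini (G ⧸ N)).one_mem
  have hTle : ∀ M : Subgroup G, IsCoatom M → N ≤ M → T ≤ M := by
    intro M hM hNM
    have hco2 : IsCoatom (M.map f) := aux_isCoatom_map hfs hM (hker.le.trans hNM)
    have h1 : frattini (G ⧸ N) ≤ M.map f := frattini_le_coatom hco2
    calc T ≤ (M.map f).comap f := Subgroup.comap_mono h1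
      _ = M ⊔ f.ker := Subgroup.comap_map_eq f M
      _ = M := by rw [hker, sup_eq_left.2 hNM]
  set Bad := {M : Subgroup G | IsCoatom M ∧ ¬ N ≤ M} with hBad
  set V := sInf Bad with hVdef
  have hbad : ∀ M ∈ Bad, M.Normal ∧ (∀ a b : G, a * b * a⁻¹ * b⁻¹ ∈ M) ∧
      (∀ (x : G) (q : ℕ), Nat.Prime q → x ^ (q * q) ∈ M → x ^ q ∈ M) :=
    fun M hM => aux_bad_facts hc hM.1 hM.2
  -- key step
  have key : T ≤ N ⊔ V := by
    by_contra hcon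
    obtain ⟨t, htT, htNV⟩ := SetLike.not_le_iff_exists.mp hcon
    obtain ⟨K, ⟨hK1, hK2⟩, hKmax⟩ :=
      Set.Finite.exists_maximalFor id {C : Subgroup G | N ⊔ V ≤ C ∧ t ∉ C}
        (Set.toFinite _) ⟨N ⊔ V, le_rfl, htNV⟩
    have hover : ∀ C : Subgroup G, K < C → t ∈ C := by
      intro C hC
      by_contra htC
      exact hC.ne (le_antisymm hC.le (hKmax ⟨hK1.trans hC.le, htC⟩ hC.le))
    have hVK : V ≤ K := le_sup_right.trans hK1
    have hNK : N ≤ K := le_sup_left.trans hK1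
    haveI hKnormal : K.Normal := by
      constructor
      intro k hk g
      have hcomm : g * k * g⁻¹ * k⁻¹ ∈ V :=
        Subgroup.mem_sInf.2 fun M hM => (hbad M hM).2.1 g k
      have h0 : g * k * g⁻¹ = g * k * g⁻¹ * k⁻¹ * k := by group
      rw [h0]
      exact K.mul_mem (hVK hcomm) hk
    set π := QuotientGroup.mk' K with hπdef
    have hπs : Function.Surjective π := QuotientGroup.mk'_surjective K
    set tb := π t with htbdef
    have htb : tb ≠ 1 := fun h => hK2 ((QuotientGroup.eq_one_iff t).1 h)
    have hmin : ∀ y : G ⧸ K, y ≠ 1 → tb ∈ Subgroup.zpowers y := by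
      intro y hy
      obtain ⟨x, rfl⟩ := hπs y
      have hx : x ∉ K := fun h => hy ((QuotientGroup.eq_one_iff x).2 h)
      have hlt : K < K ⊔ Subgroup.zpowers x := by
        refine lt_of_le_of_ne le_sup_left fun h => hx ?_
        have h1 : Subgroup.zpowers x ≤ K := h ▸ le_sup_right
        exact h1 (Subgroup.mem_zpowers x)
      have ht' : t ∈ K ⊔ Subgroup.zpowers x := hover _ hlt
      have h2 : tb ∈ (K ⊔ Subgroup.zpowers x).map π := ⟨t, ht', rfl⟩
      rw [Subgroup.map_sup, (Subgroup.map_eq_bot_iff K).2 (QuotientGroup.ker_mk' K).ge,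
        bot_sup_eq, MonoidHom.map_zpowers] at h2
      exact h2
    haveI hVnormal : V.Normal := by
      constructor
      intro v hv g
      exact Subgroup.mem_sInf.2 fun M hM =>
        ((hbad M hM).1).conj_mem v (Subgroup.mem_sInf.1 hv M hM) g
    have hsq : ∀ y : G ⧸ K, Squarefree (orderOf y) := by
      intro y
      obtain ⟨x, rfl⟩ := hπs y
      set ρ : G ⧸ V →* G ⧸ K :=
        QuotientGroup.map V K (MonoidHom.id G) (by simpa using hVK) with hρdef
      have hρx : ρ (QuotientGroup.mk' V x) = π x := QuotientGroup.map_mk' V K _ _ x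
      have h1 : orderOf (π x) ∣ orderOf (QuotientGroup.mk' V x) := by
        rw [← hρx]; exact orderOf_map_dvd ρ _
      refine Squarefree.squarefree_of_dvd h1 ?_
      set w := QuotientGroup.mk' V x with hwdef
      rw [Nat.squarefree_iff_prime_squarefree]
      intro q hq hdvd
      have hq' : Nat.Prime q := hq
      have hm0 : orderOf w ≠ 0 := (orderOf_pos w).ne'
      obtain ⟨r, hr⟩ := hdvd
      have hr0 : r ≠ 0 := fun h => hm0 (by rw [hr, h, mul_zero])
      have h3 : (w ^ r) ^ (q * q) = 1 := by
        rw [← pow_mul, mul_comm r (q * q), ← hr, pow_orderOf_eq_one]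
      have h4 : (x ^ r) ^ (q * q) ∈ V := by
        have h4' : QuotientGroup.mk' V ((x ^ r) ^ (q * q)) = 1 := by
          rw [map_pow, map_pow]; exact h3
        exact (QuotientGroup.eq_one_iff _).1 h4'
      have h5 : (x ^ r) ^ q ∈ V :=
        Subgroup.mem_sInf.2 fun M hM => (hbad M hM).2.2 _ q hq' (Subgroup.mem_sInf.1 h4 M hM)
      have h6 : (w ^ r) ^ q = 1 := by
        have h6' : QuotientGroup.mk' V ((x ^ r) ^ q) = 1 := (QuotientGroup.eq_one_iff _).2 h5
        rw [map_pow, map_pow] at h6'; exact h6'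
      have h7 : orderOf w ∣ r * q := orderOf_dvd_of_pow_eq_one (by rw [pow_mul]; exact h6)
      have h8 : q * q * r ≤ r * q :=
        Nat.le_of_dvd (Nat.mul_pos (Nat.pos_of_ne_zero hr0) hq'.pos) (hr ▸ h7)
      have hqr : 0 < q * r := Nat.mul_pos hq'.pos (Nat.pos_of_ne_zero hr0)
      have h9 : 2 * (q * r) ≤ q * (q * r) := Nat.mul_le_mul_right _ hq'.two_le
      have h10 : q * q * r = q * (q * r) := by ring
      have h11 : r * q = q * r := by ring
      rw [h10, h11] at h8
      have h12 : 2 * (q * r) ≤ q * r := h9.trans h8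
      obtain ⟨s, hs⟩ : ∃ s, s = q * r := ⟨_, rfl⟩
      rw [← hs] at h12 hqr
      omega
    have hm1 : orderOf tb ≠ 1 := fun h => htb (orderOf_eq_one_iff.1 h)
    have hm0 : orderOf tb ≠ 0 := (orderOf_pos tb).ne'
    set p := (orderOf tb).minFac with hpdef
    have hp : p.Prime := Nat.minFac_prime hm1
    have hptb : orderOf tb = p := by
      have hdp : p ∣ orderOf tb := Nat.minFac_dvd _
      set z := tb ^ (orderOf tb / p) with hz
      have hzo : orderOf z = p := orderOf_pow_orderOf_div hm0 hdp
      have hz1 : z ≠ 1 := fun h => hp.ne_one (by rw [← hzo, h, orderOf_one])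
      have h1 : tb ∈ Subgroup.zpowers z := hmin z hz1
      have h2 : orderOf tb ∣ p := hzo ▸ orderOf_dvd_of_mem_zpowers h1
      exact (Nat.Prime.eq_one_or_self_of_dvd hp _ h2).resolve_left hm1
    have hall : ∀ y : G ⧸ K, y ∈ Subgroup.zpowers tb := by
      intro y
      by_cases hy : y = 1
      · rw [hy]; exact Subgroup.one_mem _
      have hy0 : orderOf y ≠ 0 := (orderOf_pos y).ne'
      have hy1 : orderOf y ≠ 1 := fun h => hy (orderOf_eq_one_iff.1 h)
      have hfac : ∀ q : ℕ, q.Prime → q ∣ orderOf y → q = p := by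
        intro q hq hqd
        set w := y ^ (orderOf y / q) with hw
        have hwo : orderOf w = q := orderOf_pow_orderOf_div hy0 hqd
        have hw1 : w ≠ 1 := fun h => hq.ne_one (by rw [← hwo, h, orderOf_one])
        have h1 : tb ∈ Subgroup.zpowers w := hmin w hw1
        have h2 : p ∣ q := by
          have h2' := orderOf_dvd_of_mem_zpowers h1
          rwa [hptb, hwo] at h2'
        exact ((Nat.prime_dvd_prime_iff_eq hp hq).1 h2).symm
      have hyp : orderOf y = p := by
        have hpd : p ∣ orderOf y := by
          have h1 := hfac (orderOf y).minFac (Nat.minFac_prime hy1) (Nat.minFac_dvd _)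
          exact h1 ▸ Nat.minFac_dvd _
        obtain ⟨r, hr⟩ := hpd
        by_cases hr1 : r = 1
        · rw [hr, hr1, mul_one]
        · have hr0 : r ≠ 0 := fun h => hy0 (by rw [hr, h, mul_zero])
          have hq' := Nat.minFac_prime hr1
          have h1 : r.minFac ∣ orderOf y := (Nat.minFac_dvd r).trans ⟨p, by rw [hr]; ring⟩
          have hqp : r.minFac = p := hfac _ hq' h1
          have h2 : p * p ∣ orderOf y := by
            rw [hr]
            exact mul_dvd_mul_left p (hqp ▸ Nat.minFac_dvd r)
          exact ((Nat.squarefree_iff_prime_squarefree.1 (hsq y)) p hp h2).elim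
      have h1 : tb ∈ Subgroup.zpowers y := hmin y hy
      have h2 : Subgroup.zpowers tb ≤ Subgroup.zpowers y := Subgroup.zpowers_le.2 h1
      have h3 : Subgroup.zpowers tb = Subgroup.zpowers y := by
        apply aux_sub_eq _ _ h2
        rw [Nat.card_zpowers, Nat.card_zpowers, hyp, hptb]
      rw [h3]
      exact Subgroup.mem_zpowers y
    have hKco : IsCoatom K := by
      constructor
      · exact fun h => hK2 (h ▸ Subgroup.mem_top t)
      · intro C hC
        obtain ⟨c, hcC, hcK⟩ := SetLike.exists_of_lt hC
        have hc1 : π c ≠ 1 := fun h => hcK ((QuotientGroup.eq_one_iff c).1 h)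
        have htc : tb ∈ Subgroup.zpowers (π c) := hmin _ hc1
        have hzz : ∀ y : G ⧸ K, y ∈ Subgroup.zpowers (π c) := fun y =>
          Subgroup.zpowers_le.2 htc (hall y)
        rw [eq_top_iff]
        intro g _
        obtain ⟨k, hk⟩ := Subgroup.mem_zpowers_iff.1 (hzz (π g))
        have h1 : π (c ^ k) = π g := by rw [map_zpow]; exact hk
        have h9 : (c ^ k)⁻¹ * g ∈ K := QuotientGroup.eq.1 h1
        have h10 : g = c ^ k * ((c ^ k)⁻¹ * g) := by group
        rw [h10]
        exact C.mul_mem (C.zpow_mem hcC k) (hC.le h9)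
    exact hK2 (hTle K hKco hNK htT)
  -- from key to T ≤ N ⊔ frattini G
  have key2 : T ≤ N ⊔ frattini G := by
    intro t ht
    have ht2 : t ∈ (↑(N ⊔ V) : Set G) := key ht
    rw [Subgroup.normal_mul] at ht2
    obtain ⟨n, hn, v, hv, rfl⟩ := ht2
    have hvT : v ∈ T := by
      have : n⁻¹ * (n * v) ∈ T := T.mul_mem (T.inv_mem (hNT hn)) ht
      simpa using this
    have hvF : v ∈ frattini G := by
      have : ∀ M : Subgroup G, IsCoatom M → v ∈ M := by
        intro M hM
        by_cases hNM : N ≤ M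
        · exact hTle M hM hNM (by exact hvT)
        · exact sInf_le (show M ∈ Bad from ⟨hM, hNM⟩) hv
      rw [frattini, Order.radical]
      simp only [Subgroup.mem_iInf, Set.mem_setOf_eq]
      exact fun M hM => this M hM
    exact Subgroup.mul_mem _ (Subgroup.mem_sup_left hn) (Subgroup.mem_sup_right hvF)
  -- conclude
  apply le_antisymm
  · have h3 : frattini (G ⧸ N) = T.map f :=
      (Subgroup.map_comap_eq_self_of_surjective hfs _).symm
    rw [h3]
    calc T.map f ≤ (N ⊔ frattini G).map f := Subgroup.map_mono key2
      _ = N.map f ⊔ (frattini G).map f := by rw [Subgroup.map_sup]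
      _ = (frattini G).map f := by rw [hmapN, bot_sup_eq]
  · rw [Subgroup.map_le_iff_le_comap]
    exact frattini_le_comap_frattini_of_surjective hfs
end

section
/- If N ≤ Soc(Z(G)) for a finite group G, then Φ(G/N) = Φ(G)N/N. -/
open Subgroup

section Aux

variable {G : Type*} [Group G]

lemma aux_frattini_eq (G : Type*) [Group G] :
    frattini G = ⨅ M ∈ {M : Subgroup G | IsCoatom M}, M := rfl

lemma aux_normal_of_le_center {Z : Subgroup G} (h : Z ≤ Subgroup.center G) : Z.Normal := by
  constructor
  intro n hn g
  have hc := Subgroup.mem_center_iff.mp (h hn) g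
  have h2 : g * n * g⁻¹ = n := by rw [hc]; exact mul_inv_cancel_right n g
  rwa [h2]

lemma aux_mem_sup {A Z : Subgroup G} [Z.Normal] {x : G} (hx : x ∈ A ⊔ Z) :
    ∃ a ∈ A, ∃ w ∈ Z, x = a * w := by
  have h : x ∈ (↑(A ⊔ Z) : Set G) := hx
  rw [Subgroup.mul_normal] at h
  obtain ⟨a, ha, w, hw, h⟩ := h
  exact ⟨a, ha, w, hw, h.symm⟩

lemma aux_decomp {A Z : Subgroup G} [Z.Normal] (htop : A ⊔ Z = ⊤) (g : G) :
    ∃ a ∈ A, ∃ w ∈ Z, g = a * w :=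
  aux_mem_sup (by rw [htop]; trivial)

lemma aux_normal_of_sup_eq_top {A Z : Subgroup G} (hZ : Z ≤ Subgroup.center G)
    (htop : A ⊔ Z = ⊤) : A.Normal := by
  haveI := aux_normal_of_le_center hZ
  constructor
  intro a ha g
  obtain ⟨b, hb, w, hw, rfl⟩ := aux_decomp htop g
  have hwc : ∀ x : G, x * w = w * x := fun x => Subgroup.mem_center_iff.mp (hZ hw) x
  have h1 : b * w * a * (b * w)⁻¹ = b * (w * a * w⁻¹) * b⁻¹ := by group
  have h2 : w * a * w⁻¹ = a := by rw [← hwc a]; exact mul_inv_cancel_right a w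
  rw [h1, h2]
  exact A.mul_mem (A.mul_mem hb ha) (A.inv_mem hb)

lemma aux_squarefree_lcm {a b : ℕ} (ha : Squarefree a) (hb : Squarefree b) :
    Squarefree (Nat.lcm a b) := by
  have ha0 : a ≠ 0 := ha.ne_zero
  have hb0 : b ≠ 0 := hb.ne_zero
  have h0 : Nat.lcm a b ≠ 0 := Nat.lcm_ne_zero ha0 hb0
  rw [Nat.squarefree_iff_factorization_le_one h0]
  intro p
  rw [Nat.factorization_lcm ha0 hb0, Finsupp.sup_apply]
  exact sup_le ((Nat.squarefree_iff_factorization_le_one ha0).mp ha p)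
    ((Nat.squarefree_iff_factorization_le_one hb0).mp hb p)

lemma aux_minimal_card_prime {C : Type*} [Group C] [Finite C]
    (hcomm : ∀ a b : C, a * b = b * a) {N : Subgroup C} (hN : IsMinimalNormal N) :
    Nat.Prime (Nat.card N) := by
  obtain ⟨-, hbot, hmin⟩ := hN
  have h1 : 1 < Nat.card N := N.one_lt_card_iff_ne_bot.mpr hbot
  obtain ⟨p, hp, hpd⟩ := Nat.exists_prime_and_dvd (n := Nat.card N) (by omega)
  haveI : Fact p.Prime := ⟨hp⟩
  haveI : Fintype ↥N := Fintype.ofFinite _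
  have hpd' : p ∣ Fintype.card ↥N := by rwa [← Nat.card_eq_fintype_card]
  obtain ⟨g, hg⟩ := exists_prime_orderOf_dvd_card (G := ↥N) p hpd'
  have horder : orderOf (g : C) = p := by
    have h2 := orderOf_injective N.subtype Subtype.coe_injective g
    rw [← hg]; exact h2
  have hne : Subgroup.zpowers (g : C) ≠ ⊥ := by
    intro h
    have hmem := Subgroup.mem_zpowers (g : C)
    rw [h, Subgroup.mem_bot] at hmem
    rw [hmem, orderOf_one] at horder
    exact hp.ne_one horder.symm
  have hnorm : (Subgroup.zpowers (g : C)).Normal := by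
    constructor
    intro n hn x
    have h2 : x * n * x⁻¹ = n := by rw [hcomm x n]; exact mul_inv_cancel_right n x
    rwa [h2]
  have heq := hmin _ hnorm (Subgroup.zpowers_le.mpr g.2) hne
  rw [← heq, Nat.card_zpowers, horder]
  exact hp

lemma aux_centerSocle_le_center : centerSocle G ≤ Subgroup.center G :=
  Subgroup.map_subtype_le _

lemma aux_squarefree_socle_center [Finite G] {y : ↥(Subgroup.center G)}
    (hy : y ∈ socle ↥(Subgroup.center G)) : Squarefree (orderOf y) := by
  have hcomm : ∀ a b : ↥(Subgroup.center G), a * b = b * a := by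
    intro a b
    exact Subtype.ext ((Subgroup.mem_center_iff.mp a.2 (b : G)).symm)
  have hy' : y ∈ Subgroup.closure {x : ↥(Subgroup.center G) |
      ∃ N : Subgroup ↥(Subgroup.center G), IsMinimalNormal N ∧ x ∈ N} := hy
  refine Subgroup.closure_induction (p := fun g _ => Squarefree (orderOf g))
    ?_ ?_ ?_ ?_ hy'
  · intro z hz
    obtain ⟨N', hN', hzN'⟩ := hz
    have hp := aux_minimal_card_prime hcomm hN'
    have hdvd : orderOf z ∣ Nat.card N' := Subgroup.orderOf_dvd_natCard N' hzN'
    exact Squarefree.squarefree_of_dvd hdvd hp.squarefree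
  · simp only [orderOf_one]; exact squarefree_one
  · intro a b ha hb iha ihb
    have hcom : Commute a b := hcomm a b
    exact Squarefree.squarefree_of_dvd hcom.orderOf_mul_dvd_lcm (aux_squarefree_lcm iha ihb)
  · intro a ha iha
    simpa [orderOf_inv] using iha

lemma aux_squarefree_centerSocle [Finite G] {x : G} (hx : x ∈ centerSocle G) :
    Squarefree (orderOf x) := by
  obtain ⟨y, hy, rfl⟩ := Subgroup.mem_map.mp hx
  rw [orderOf_injective (Subgroup.center G).subtype Subtype.coe_injective y]
  exact aux_squarefree_socle_center hy

lemma aux_exists_prime_order [Finite G] {N : Subgroup G}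
    (hN : N ≤ centerSocle G) (h : ¬ N ≤ frattini G) :
    ∃ z, z ∈ N ∧ Nat.Prime (orderOf z) ∧ z ∉ frattini G := by
  by_contra hcon
  push_neg at hcon
  apply h
  have key : ∀ n, ∀ x, x ∈ N → orderOf x = n → x ∈ frattini G := by
    intro n
    induction n using Nat.strong_induction_on with
    | _ n ih =>
      intro x hxN hord
      rcases eq_or_ne n 1 with h1 | h1
      · have hx1 : x = 1 := orderOf_eq_one_iff.mp (by rw [hord, h1])
        rw [hx1]; exact one_mem _
      have hn0 : n ≠ 0 := by rw [← hord]; exact (orderOf_pos x).ne'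
      obtain ⟨p, hp, hpd⟩ := Nat.exists_prime_and_dvd h1
      obtain ⟨m, hm⟩ := hpd
      have hsf : Squarefree n := hord ▸ aux_squarefree_centerSocle (hN hxN)
      have hm0 : m ≠ 0 := by rintro rfl; exact hn0 (by rw [hm, mul_zero])
      have hpm : ¬ p ∣ m := by
        intro hdvd
        obtain ⟨k, rfl⟩ := hdvd
        have hsq : p * p ∣ n := ⟨k, by rw [hm]; ring⟩
        exact hp.ne_one (Nat.isUnit_iff.mp (hsf p hsq))
      have hgcd1 : Nat.gcd n m = m := Nat.gcd_eq_right ⟨p, by rw [hm, mul_comm]⟩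
      have hxm : orderOf (x ^ m) = p := by
        rw [orderOf_pow' x hm0, hord, hgcd1, hm,
          Nat.mul_div_cancel _ (Nat.pos_of_ne_zero hm0)]
      have hgcd2 : Nat.gcd n p = p := Nat.gcd_eq_right ⟨m, hm⟩
      have hxp : orderOf (x ^ p) = m := by
        rw [orderOf_pow' x hp.pos.ne', hord, hgcd2, hm, Nat.mul_div_cancel_left _ hp.pos]
      have hmn : m < n := by
        have h2 : 2 ≤ p := hp.two_le
        have h3 : 1 ≤ m := Nat.pos_of_ne_zero hm0
        have h4 : 2 * m ≤ p * m := Nat.mul_le_mul_right m h2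
        rw [hm]; omega
      have hxpF : x ^ p ∈ frattini G := ih m hmn (x ^ p) (N.pow_mem hxN p) hxp
      have hxmF : x ^ m ∈ frattini G := hcon (x ^ m) (N.pow_mem hxN m) (by rw [hxm]; exact hp)
      have hco : Nat.Coprime p m := (Nat.Prime.coprime_iff_not_dvd hp).mpr hpm
      obtain ⟨a, b, hab⟩ := Nat.Coprime.isCoprime hco
      have hx1 : x = (x ^ p) ^ a * (x ^ m) ^ b := by
        rw [← zpow_natCast x p, ← zpow_natCast x m, ← zpow_mul, ← zpow_mul, ← zpow_add,
          mul_comm ((p : ℤ)) a, mul_comm ((m : ℤ)) b, hab, zpow_one]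
      rw [hx1]
      exact mul_mem ((frattini G).zpow_mem hxpF a) ((frattini G).zpow_mem hxmF b)
  intro x hx
  exact key (orderOf x) x hx rfl

lemma aux_exists_coatom {z : G} (hz : z ∉ frattini G) :
    ∃ M : Subgroup G, IsCoatom M ∧ z ∉ M := by
  by_contra hcon
  push_neg at hcon
  apply hz
  rw [aux_frattini_eq]
  exact Subgroup.mem_iInf.mpr fun M => Subgroup.mem_iInf.mpr fun hM => hcon M hM

lemma aux_key (G : Type*) [Group G] [Finite G] :
    ∀ N : Subgroup G, N ≤ centerSocle G →
      (⨅ M ∈ {M : Subgroup G | IsCoatom M ∧ N ≤ M}, M) = frattini G ⊔ N := by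
  suffices H : ∀ n : ℕ, ∀ N : Subgroup G, Nat.card N = n → N ≤ centerSocle G →
      (⨅ M ∈ {M : Subgroup G | IsCoatom M ∧ N ≤ M}, M) = frattini G ⊔ N by
    exact fun N hN => H _ N rfl hN
  intro n
  induction n using Nat.strong_induction_on with
  | _ n ih =>
  intro N hcard hN
  have hGE : frattini G ⊔ N ≤ ⨅ M ∈ {M : Subgroup G | IsCoatom M ∧ N ≤ M}, M :=
    sup_le (le_iInf₂ fun M hM => frattini_le_coatom hM.1) (le_iInf₂ fun M hM => hM.2)
  by_cases hNf : N ≤ frattini G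
  · refine le_antisymm ?_ hGE
    have h1 : (⨅ M ∈ {M : Subgroup G | IsCoatom M ∧ N ≤ M}, M) ≤ frattini G := by
      rw [aux_frattini_eq]
      exact le_iInf₂ fun M hM => biInf_le _ ⟨hM, hNf.trans (frattini_le_coatom hM)⟩
    exact h1.trans le_sup_left
  · obtain ⟨z, hzN, hzp, hzf⟩ := aux_exists_prime_order hN hNf
    obtain ⟨M, hM, hzM⟩ := aux_exists_coatom hzf
    set Z := Subgroup.zpowers z with hZdef
    have hZN : Z ≤ N := Subgroup.zpowers_le.mpr hzN
    have hZc : Z ≤ Subgroup.center G :=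
      Subgroup.zpowers_le.mpr (aux_centerSocle_le_center (hN hzN))
    haveI hZnorm : Z.Normal := aux_normal_of_le_center hZc
    have hMZtop : M ⊔ Z = ⊤ :=
      hM.2 _ (lt_of_le_of_ne le_sup_left (fun he => hzM (by
        rw [he]; exact (le_sup_right : Z ≤ M ⊔ Z) (Subgroup.mem_zpowers z))))
    have hMZbot : ∀ w, w ∈ M → w ∈ Z → w = 1 := by
      intro w hwM hwZ
      by_contra hw1
      obtain ⟨k, hk⟩ := Subgroup.mem_zpowers_iff.mp hwZ
      have hyM : z ^ k.natAbs ∈ M := by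
        rcases Int.natAbs_eq k with h | h
        · rw [← zpow_natCast, ← h, hk]; exact hwM
        · have h3 : ((k.natAbs : ℤ)) = -k := by omega
          have h2 : z ^ ((k.natAbs : ℤ)) = w⁻¹ := by
            rw [h3, zpow_neg, hk]
          rw [← zpow_natCast, h2]
          exact M.inv_mem hwM
      have hynot : ¬ orderOf z ∣ k.natAbs := by
        intro hd
        have h1 : z ^ ((k.natAbs : ℤ)) = 1 := by
          rw [zpow_natCast]; exact orderOf_dvd_iff_pow_eq_one.mp hd
        apply hw1
        rcases Int.natAbs_eq k with h | h
        · rw [← hk, h, h1]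
        · rw [← hk, h, zpow_neg, h1, inv_one]
      have hco : Nat.Coprime (orderOf z) k.natAbs :=
        (Nat.Prime.coprime_iff_not_dvd hzp).mpr hynot
      obtain ⟨a, b, hab⟩ := Nat.Coprime.isCoprime hco
      have hzo : z ^ ((orderOf z : ℤ)) = 1 := by
        rw [zpow_natCast]; exact pow_orderOf_eq_one z
      have hz1 : z = (z ^ ((orderOf z : ℤ))) ^ a * (z ^ ((k.natAbs : ℤ))) ^ b := by
        rw [← zpow_mul, ← zpow_mul, ← zpow_add, mul_comm ((orderOf z : ℤ)) a,
          mul_comm ((k.natAbs : ℤ)) b, hab, zpow_one]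
      apply hzM
      rw [hz1, hzo, one_zpow, one_mul, zpow_natCast]
      exact M.zpow_mem hyM b
    have hdecompM : ∀ g : G, ∃ a ∈ M, ∃ w ∈ Z, g = a * w := aux_decomp hMZtop
    have hcardlt : Nat.card ↥(N ⊓ M) < n := by
      rw [← hcard]
      have hle : Nat.card ↥(N ⊓ M) ≤ Nat.card N :=
        Subgroup.card_le_of_le inf_le_left
      rcases lt_or_eq_of_le hle with h | h
      · exact h
      · exfalso
        have hbij : Function.Bijective (Subgroup.inclusion (inf_le_left : N ⊓ M ≤ N)) :=
          (Nat.bijective_iff_injective_and_card _).mpr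
            ⟨Subgroup.inclusion_injective _, by rw [h]⟩
        obtain ⟨y, hy⟩ := hbij.2 ⟨z, hzN⟩
        have hyz : (y : G) = z := by
          simpa using congrArg Subtype.val hy
        exact hzM (hyz ▸ (Subgroup.mem_inf.mp y.2).2)
    have hIH := ih _ hcardlt (N ⊓ M) rfl (le_trans inf_le_left hN)
    refine le_antisymm ?_ hGE
    set P := ⨅ M' ∈ {M' : Subgroup G | IsCoatom M' ∧ N ≤ M'}, M' with hPdef
    have hNP : N ≤ P := le_iInf₂ fun M' hM' => hM'.2
    have hkey : P ⊓ M ≤ ⨅ M₀ ∈ {M₀ : Subgroup G | IsCoatom M₀ ∧ N ⊓ M ≤ M₀}, M₀ := by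
      refine le_iInf₂ fun M₀ hM₀ => ?_
      by_cases hzM₀ : z ∈ M₀
      · have hNM₀ : N ≤ M₀ := by
          intro nn hnn
          obtain ⟨a, ha, w, hw, rfl⟩ := hdecompM nn
          have haN : a ∈ N := by
            have h2 : a = (a * w) * w⁻¹ := by group
            rw [h2]; exact N.mul_mem hnn (N.inv_mem (hZN hw))
          exact M₀.mul_mem (hM₀.2 (Subgroup.mem_inf.mpr ⟨haN, ha⟩))
            (Subgroup.zpowers_le.mpr hzM₀ hw)
        exact inf_le_left.trans (biInf_le _ ⟨hM₀.1, hNM₀⟩)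
      by_cases hMM₀ : M ≤ M₀
      · exact inf_le_right.trans hMM₀
      · have hM₀Ztop : M₀ ⊔ Z = ⊤ :=
          hM₀.1.2 _ (lt_of_le_of_ne le_sup_left (fun he => hzM₀ (by
            rw [he]; exact (le_sup_right : Z ≤ M₀ ⊔ Z) (Subgroup.mem_zpowers z))))
        haveI hM₀norm : M₀.Normal := aux_normal_of_sup_eq_top hZc hM₀Ztop
        set M₂ := (M₀ ⊓ M) ⊔ Z with hM₂def
        have hM₂M : ∀ x, x ∈ M₂ → x ∈ M → x ∈ M₀ := by
          intro x hx hxM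
          obtain ⟨a, ha, w, hw, rfl⟩ := aux_mem_sup hx
          have hwM : w ∈ M := by
            have h2 : w = a⁻¹ * (a * w) := by group
            rw [h2]; exact M.mul_mem (M.inv_mem (Subgroup.mem_inf.mp ha).2) hxM
          rw [hMZbot w hwM hw, mul_one]
          exact (Subgroup.mem_inf.mp ha).1
        have hNM₂ : N ≤ M₂ := by
          intro nn hnn
          obtain ⟨a, ha, w, hw, rfl⟩ := hdecompM nn
          have haN : a ∈ N := by
            have h2 : a = (a * w) * w⁻¹ := by group
            rw [h2]; exact N.mul_mem hnn (N.inv_mem (hZN hw))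
          exact M₂.mul_mem
            ((le_sup_left : M₀ ⊓ M ≤ M₂)
              (Subgroup.mem_inf.mpr ⟨hM₀.2 (Subgroup.mem_inf.mpr ⟨haN, ha⟩), ha⟩))
            ((le_sup_right : Z ≤ M₂) hw)
        have hM₂coatom : IsCoatom M₂ := by
          constructor
          · intro htop2
            apply hMM₀
            intro x hxM
            exact hM₂M x (by rw [htop2]; trivial) hxM
          · intro H hH
            have hZH : Z ≤ H := le_trans le_sup_right hH.le
            obtain ⟨h, hhH, hhM₂⟩ := SetLike.exists_of_lt hH
            obtain ⟨mh, hmh, wh, hwh, rfl⟩ := hdecompM h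
            have hmhH : mh ∈ H := by
              have h2 : mh = (mh * wh) * wh⁻¹ := by group
              rw [h2]; exact H.mul_mem hhH (H.inv_mem (hZH hwh))
            have hmhM₀ : mh ∉ M₀ := by
              intro hcmem
              exact hhM₂ (M₂.mul_mem
                ((le_sup_left : M₀ ⊓ M ≤ M₂) (Subgroup.mem_inf.mpr ⟨hcmem, hmh⟩))
                ((le_sup_right : Z ≤ M₂) hwh))
            have hsup : (H ⊓ M) ⊔ M₀ = ⊤ := by
              apply hM₀.1.2
              refine lt_of_le_of_ne le_sup_right (fun he => hmhM₀ ?_)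
              rw [he]
              exact (le_sup_left : H ⊓ M ≤ (H ⊓ M) ⊔ M₀) (Subgroup.mem_inf.mpr ⟨hmhH, hmh⟩)
            have hMH : M ≤ H := by
              intro m' hm'
              have hm'top : m' ∈ (H ⊓ M) ⊔ M₀ := by rw [hsup]; trivial
              obtain ⟨u, hu, v, hv, rfl⟩ := aux_mem_sup hm'top
              have hvM : v ∈ M := by
                have h2 : v = u⁻¹ * (u * v) := by group
                rw [h2]; exact M.mul_mem (M.inv_mem (Subgroup.mem_inf.mp hu).2) hm'
              exact H.mul_mem (Subgroup.mem_inf.mp hu).1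
                (hH.le ((le_sup_left : M₀ ⊓ M ≤ M₂) (Subgroup.mem_inf.mpr ⟨hv, hvM⟩)))
            rw [eq_top_iff, ← hMZtop]
            exact sup_le hMH hZH
        have hPM₂ : P ≤ M₂ := biInf_le _ ⟨hM₂coatom, hNM₂⟩
        intro x hx
        rw [Subgroup.mem_inf] at hx
        exact hM₂M x (hPM₂ hx.1) hx.2
    intro x hx
    obtain ⟨m0, hm0, w, hw, rfl⟩ := hdecompM x
    have hwP : w ∈ P := hNP (hZN hw)
    have hm0P : m0 ∈ P := by
      have h2 : m0 = (m0 * w) * w⁻¹ := by group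
      rw [h2]; exact P.mul_mem hx (P.inv_mem hwP)
    have hm0F : m0 ∈ frattini G ⊔ (N ⊓ M) := by
      rw [← hIH]; exact hkey (Subgroup.mem_inf.mpr ⟨hm0P, hm0⟩)
    have hm0' : m0 ∈ frattini G ⊔ N :=
      (sup_le_sup_left inf_le_left (frattini G) :
        frattini G ⊔ (N ⊓ M) ≤ frattini G ⊔ N) hm0F
    exact mul_mem hm0' ((le_sup_right : N ≤ frattini G ⊔ N) (hZN hw))

end Aux

/-- If `N ≤ Soc(Z(G))` then `Φ(G/N) = Φ(G)N/N`. -/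
theorem stmt_12 (G : Type*) [Group G] [Finite G] (N : Subgroup G) [N.Normal]
    (hc : N ≤ centerSocle G) :
    frattini (G ⧸ N) = (frattini G).map (QuotientGroup.mk' N) := by
  have hkey := aux_key G N hc
  have hsurj : Function.Surjective (QuotientGroup.mk' N) := QuotientGroup.mk'_surjective N
  have hcomap : Subgroup.comap (QuotientGroup.mk' N) (frattini (G ⧸ N)) =
      ⨅ M ∈ {M : Subgroup G | IsCoatom M ∧ N ≤ M}, M := by
    apply le_antisymm
    · refine le_iInf₂ fun M hM => ?_
      have hco : IsCoatom (M.map (QuotientGroup.mk' N)) := by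
        constructor
        · intro htop
          have h1 : Subgroup.comap (QuotientGroup.mk' N) (M.map (QuotientGroup.mk' N)) = ⊤ := by
            rw [htop]; exact Subgroup.comap_top _
          rw [Subgroup.comap_map_eq, QuotientGroup.ker_mk', sup_of_le_left hM.2] at h1
          exact hM.1.1 h1
        · intro K hK
          have h1 : M ≤ Subgroup.comap (QuotientGroup.mk' N) K := by
            calc M ≤ M ⊔ N := le_sup_left
              _ = Subgroup.comap (QuotientGroup.mk' N) (M.map (QuotientGroup.mk' N)) := by
                  rw [Subgroup.comap_map_eq, QuotientGroup.ker_mk']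
              _ ≤ _ := Subgroup.comap_mono hK.le
          have h2 : M ≠ Subgroup.comap (QuotientGroup.mk' N) K := by
            intro he
            exact hK.ne (by rw [he, Subgroup.map_comap_eq_self_of_surjective hsurj])
          have h3 : Subgroup.comap (QuotientGroup.mk' N) K = ⊤ :=
            hM.1.2 _ (lt_of_le_of_ne h1 h2)
          have h4 := congrArg (Subgroup.map (QuotientGroup.mk' N)) h3
          rwa [Subgroup.map_comap_eq_self_of_surjective hsurj,
            Subgroup.map_top_of_surjective _ hsurj] at h4
      calc Subgroup.comap (QuotientGroup.mk' N) (frattini (G ⧸ N))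
          ≤ Subgroup.comap (QuotientGroup.mk' N) (M.map (QuotientGroup.mk' N)) :=
            Subgroup.comap_mono (frattini_le_coatom hco)
        _ = M ⊔ N := by rw [Subgroup.comap_map_eq, QuotientGroup.ker_mk']
        _ = M := sup_of_le_left hM.2
    · rw [aux_frattini_eq (G ⧸ N)]
      simp_rw [Subgroup.comap_iInf]
      refine le_iInf₂ fun K hK => ?_
      have hmem : Subgroup.comap (QuotientGroup.mk' N) K ∈
          {M : Subgroup G | IsCoatom M ∧ N ≤ M} := by
        refine ⟨Subgroup.isCoatom_comap_of_surjective hsurj hK, ?_⟩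
        intro nn hnn
        have h1 : (QuotientGroup.mk' N) nn = 1 := (QuotientGroup.eq_one_iff nn).mpr hnn
        rw [Subgroup.mem_comap, h1]
        exact K.one_mem
      exact biInf_le _ hmem
  have hfin := congrArg (Subgroup.map (QuotientGroup.mk' N)) hcomap
  rw [Subgroup.map_comap_eq_self_of_surjective hsurj] at hfin
  have hmapN : N.map (QuotientGroup.mk' N) = ⊥ := by
    rw [Subgroup.map_eq_bot_iff, QuotientGroup.ker_mk']
  rw [hfin, hkey, Subgroup.map_sup, hmapN, sup_bot_eq]
end

section
/- Define S_0 = 1 and S_{i+1}/S_i = Soc(Z(G/S_i)) for a finite group G. Then for every j ≥ 0 and every normal subgroup H of G with S_j ≤ H ≤ S_{j+1}, one has Φ(G/H) = Φ(G)H/H. -/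
open Subgroup

namespace Stmt13Aux

open Subgroup Function Pointwise

universe u

section General

variable {G : Type u} [Group G]


variable {G : Type*} [Group G]

lemma normal_of_le_center {N : Subgroup G} (h : N ≤ center G) : N.Normal := by
  constructor
  intro n hn g
  have hgn : g * n = n * g := Subgroup.mem_center_iff.mp (h hn) g
  have : g * n * g⁻¹ = n := by rw [hgn]; group
  rw [this]; exact hn

lemma modular {H K P : Subgroup G} (hP : P.Normal) (hHK : H ≤ K) :
    (H ⊔ P) ⊓ K = H ⊔ (P ⊓ K) := by
  haveI := hP
  refine le_antisymm ?_ (le_inf (sup_le_sup_left inf_le_left H)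
    (sup_le hHK inf_le_right))
  rintro x ⟨hx1, hxK⟩
  have : x ∈ ((H : Set G) * (P : Set G)) := by rw [← Subgroup.mul_normal]; exact hx1
  obtain ⟨h, hh, p, hp, rfl⟩ := this
  exact mul_mem (le_sup_left (α := Subgroup G) hh)
    ((le_sup_right (α := Subgroup G)) (mem_inf.mpr ⟨hp, (mul_mem_cancel_left (hHK hh)).mp hxK⟩))

lemma sup_decomp {P M K : Subgroup G} (hP : P.Normal) (hPK : P ≤ K) (htop : M ⊔ P = ⊤) :
    K = (K ⊓ M) ⊔ P := by
  haveI := hP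
  refine le_antisymm ?_ (sup_le inf_le_left hPK)
  intro k hk
  have : k ∈ ((M : Set G) * (P : Set G)) := by
    rw [← Subgroup.mul_normal, htop]; trivial
  obtain ⟨m, hm, p, hp, rfl⟩ := this
  exact mul_mem ((le_sup_left (α := Subgroup G))
    (mem_inf.mpr ⟨(mul_mem_cancel_right (hPK hp)).mp hk, hm⟩)) (le_sup_right (α := Subgroup G) hp)

def Good {G G' : Type*} [Group G] [Group G'] (φ : G →* G') : Prop :=
  frattini G' = (frattini G).map φ

lemma isCoatom_map_of_ker_le {G' : Type*} [Group G'] {φ : G →* G'} (hφ : Surjective φ)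
    {M : Subgroup G} (hM : IsCoatom M) (hker : φ.ker ≤ M) : IsCoatom (M.map φ) := by
  constructor
  · intro htop
    apply hM.1
    have := congrArg (Subgroup.comap φ) htop
    rwa [Subgroup.comap_map_eq, sup_eq_left.mpr hker, Subgroup.comap_top] at this
  · intro K hK
    have h1 : M < K.comap φ := by
      refine lt_of_le_of_ne (Subgroup.map_le_iff_le_comap.mp hK.le) ?_
      intro h
      exact hK.ne' (by rw [← Subgroup.map_comap_eq_self_of_surjective hφ K, ← h])
    have h2 : K.comap φ = ⊤ := hM.2 _ h1
    rw [← Subgroup.map_comap_eq_self_of_surjective hφ K, h2, Subgroup.map_top_of_surjective _ hφ]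

lemma subgroupOf_eq_of_map_eq {M : Subgroup G} {K' : Subgroup ↥M} {L : Subgroup G}
    (h : K'.map M.subtype = L) : K' = L.subgroupOf M := by
  subst h
  exact (Subgroup.comap_map_eq_self_of_injective M.subtype_injective K').symm

lemma sandwich {M : Subgroup G} {M' : Subgroup ↥M} (hM' : IsCoatom M') {K : Subgroup G}
    (h1 : M'.map M.subtype ≤ K) (h2 : K ≤ M) : K = M'.map M.subtype ∨ K = M := by
  have hle : M' ≤ K.subgroupOf M := Subgroup.map_le_iff_le_comap.mp h1
  rcases eq_or_lt_of_le hle with h | h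
  · left
    have := congrArg (Subgroup.map M.subtype) h
    rwa [Subgroup.subgroupOf_map_subtype, inf_eq_left.mpr h2, eq_comm] at this
  · right
    have htop := hM'.2 _ h
    have : K.subgroupOf M = M.subgroupOf M := by rw [htop, Subgroup.subgroupOf_self]
    exact le_antisymm h2 (Subgroup.subgroupOf_eq_top.mp htop)

lemma good_comp {G' G'' : Type*} [Group G'] [Group G''] {φ : G →* G'} {ψ : G' →* G''}
    (h1 : Good φ) (h2 : Good ψ) : Good (ψ.comp φ) := by
  unfold Good at *
  rw [h2, h1, Subgroup.map_map]

lemma good_of_ker_le_frattini {G' : Type*} [Group G'] {φ : G →* G'} (hφ : Surjective φ)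
    (h : φ.ker ≤ frattini G) : Good φ := by
  have hc : (frattini G').comap φ = frattini G := by
    refine le_antisymm ?_ (frattini_le_comap_frattini_of_surjective hφ)
    have key : ∀ M : Subgroup G, IsCoatom M → (frattini G').comap φ ≤ M := by
      intro M hM
      have hker : φ.ker ≤ M := h.trans (frattini_le_coatom hM)
      have hmap : IsCoatom (M.map φ) := isCoatom_map_of_ker_le hφ hM hker
      calc (frattini G').comap φ ≤ (M.map φ).comap φ :=
            Subgroup.comap_mono (frattini_le_coatom hmap)
        _ = M := by rw [Subgroup.comap_map_eq, sup_eq_left.mpr hker]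
    rw [frattini, Order.radical]
    exact le_iInf₂ key
  unfold Good
  rw [← hc, Subgroup.map_comap_eq_self_of_surjective hφ]

lemma good_of_ker_eq {K : Type*} [Group K] (ψ : G →* K) (hs : Surjective ψ)
    (N : Subgroup G) [hN : N.Normal] (hker : ψ.ker = N) (hg : Good ψ) :
    Good (QuotientGroup.mk' N) := by
  subst hker
  let e : (G ⧸ ψ.ker) ≃* K := QuotientGroup.quotientKerEquivOfSurjective ψ hs
  have hgs : Good e.symm.toMonoidHom :=
    good_of_ker_le_frattini e.symm.surjective
      (by rw [(MonoidHom.ker_eq_bot_iff _).mpr e.symm.injective]; exact bot_le)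
  have hcomp : Good (e.symm.toMonoidHom.comp ψ) := good_comp hg hgs
  have heq : e.symm.toMonoidHom.comp ψ = QuotientGroup.mk' ψ.ker := by
    ext x
    simp only [MonoidHom.comp_apply, MulEquiv.coe_toMonoidHom, QuotientGroup.mk'_apply]
    rw [MulEquiv.symm_apply_eq]
    rfl
  rwa [heq] at hcomp


end General

section Fin

variable {G : Type u} [Group G] [Finite G]


lemma inf_prime_eq_bot {p : ℕ} (pp : p.Prime) {P M : Subgroup G} (hcard : Nat.card P = p)
    (h : ¬ P ≤ M) : M ⊓ P = ⊥ := by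
  have hdvd : Nat.card ↥(M ⊓ P) ∣ p := hcard ▸ Subgroup.card_dvd_of_le inf_le_right
  rcases pp.eq_one_or_self_of_dvd _ hdvd with h1 | h1
  · exact Subgroup.card_eq_one.mp h1
  · have heq : M ⊓ P = P := Subgroup.eq_of_le_of_card_ge inf_le_right (by rw [hcard, h1])
    exact absurd (heq ▸ (inf_le_left : M ⊓ P ≤ M)) h

lemma good_mk'_prime_central {p : ℕ} (pp : p.Prime) (P : Subgroup G)
    [hPn : P.Normal] (hc : P ≤ center G) (hcard : Nat.card P = p)
    (hPf : ¬ P ≤ frattini G) : Good (QuotientGroup.mk' P) := by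
  set φ := QuotientGroup.mk' P with hφdef
  have hs : Surjective φ := QuotientGroup.mk'_surjective P
  have hkerφ : φ.ker = P := QuotientGroup.ker_mk' P
  have hex : ¬ P ≤ ⨅ M ∈ {H : Subgroup G | IsCoatom H}, M := hPf
  rw [le_iInf₂_iff] at hex; push_neg at hex
  obtain ⟨M, hM, hPM⟩ := hex
  have hMPtop : M ⊔ P = ⊤ := hM.2 _ (left_lt_sup.mpr hPM)
  have hPMbot : P ⊓ M = ⊥ := by rw [inf_comm]; exact inf_prime_eq_bot pp hcard hPM
  -- Step B2 : Φ(M) (in G) is contained in Φ(G)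
  have hB2 : (frattini ↥M).map M.subtype ≤ frattini G := by
    have : frattini G = ⨅ M₁ ∈ {H : Subgroup G | IsCoatom H}, M₁ := rfl
    rw [this]
    refine le_iInf₂ fun M₁ hM₁ => ?_
    by_cases hPM₁ : P ≤ M₁
    · have hdec : M₁ = (M₁ ⊓ M) ⊔ P := sup_decomp hPn hPM₁ hMPtop
      have hne : ¬ M ≤ M₁ := fun h => hM₁.1 (top_unique (hMPtop ▸ sup_le h hPM₁))
      have hco : IsCoatom ((M₁ ⊓ M).subgroupOf M) := by
        constructor
        · intro h
          exact hne (le_trans (Subgroup.subgroupOf_eq_top.mp h) inf_le_left)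
        · intro K' hK'
          set K := K'.map M.subtype with hKdef
          have hKM : K ≤ M := Subgroup.map_subtype_le K'
          have hDK : M₁ ⊓ M ≤ K := by
            have h0 := Subgroup.map_mono (f := M.subtype) hK'.le
            rwa [Subgroup.subgroupOf_map_subtype, inf_eq_left.mpr
              (inf_le_right : M₁ ⊓ M ≤ M)] at h0
          have hM₁K : M₁ ≤ K ⊔ P := le_trans hdec.le (sup_le_sup_right hDK P)
          rcases eq_or_lt_of_le hM₁K with h | h
          · exfalso
            have hKle : K ≤ M₁ ⊓ M := le_inf (le_trans le_sup_left h.ge) hKM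
            exact hK'.ne' (subgroupOf_eq_of_map_eq (le_antisymm hKle hDK))
          · have htop : K ⊔ P = ⊤ := hM₁.2 _ h
            have hmod : (K ⊔ P) ⊓ M = K ⊔ (P ⊓ M) := modular hPn hKM
            rw [htop, top_inf_eq, hPMbot, sup_bot_eq] at hmod
            have : K' = M.subgroupOf M := subgroupOf_eq_of_map_eq hmod.symm
            rw [this, Subgroup.subgroupOf_self]
      calc (frattini ↥M).map M.subtype
          ≤ ((M₁ ⊓ M).subgroupOf M).map M.subtype :=
            Subgroup.map_mono (frattini_le_coatom hco)
        _ = (M₁ ⊓ M) ⊓ M := Subgroup.subgroupOf_map_subtype _ _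
        _ ≤ M₁ := le_trans inf_le_left inf_le_left
    · have hM₁top : M₁ ⊔ P = ⊤ := hM₁.2 _ (left_lt_sup.mpr hPM₁)
      have hM₁n : M₁.Normal := by
        constructor
        intro n hn g
        have hg : g ∈ ((M₁ : Set G) * (P : Set G)) := by
          rw [← Subgroup.mul_normal, hM₁top]; trivial
        obtain ⟨a, ha, y, hy, rfl⟩ := hg
        have hyn : n * y = y * n := Subgroup.mem_center_iff.mp (hc hy) n
        have hy1 : y * n * y⁻¹ = n := by rw [← hyn]; group
        have hkey : a * y * n * (a * y)⁻¹ = a * (y * n * y⁻¹) * a⁻¹ := by group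
        rw [hkey, hy1]
        exact mul_mem (mul_mem ha hn) (inv_mem ha)
      by_cases hMM₁ : M ≤ M₁
      · exact le_trans (Subgroup.map_subtype_le _) hMM₁
      · have hco : IsCoatom ((M₁ ⊓ M).subgroupOf M) := by
          constructor
          · intro h
            exact hMM₁ (le_trans (Subgroup.subgroupOf_eq_top.mp h) inf_le_left)
          · intro K' hK'
            set K := K'.map M.subtype with hKdef
            have hKM : K ≤ M := Subgroup.map_subtype_le K'
            have hDK : M₁ ⊓ M ≤ K := by
              have h0 := Subgroup.map_mono (f := M.subtype) hK'.le
              rwa [Subgroup.subgroupOf_map_subtype, inf_eq_left.mpr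
                (inf_le_right : M₁ ⊓ M ≤ M)] at h0
            have hKnle : ¬ K ≤ M₁ := by
              intro h
              exact hK'.ne' (subgroupOf_eq_of_map_eq
                (le_antisymm (le_inf h hKM) hDK))
            have htop : M₁ ⊔ K = ⊤ := hM₁.2 _ (left_lt_sup.mpr hKnle)
            have hmod : (K ⊔ M₁) ⊓ M = K ⊔ (M₁ ⊓ M) := modular hM₁n hKM
            rw [sup_comm K M₁, htop, top_inf_eq, sup_eq_left.mpr hDK] at hmod
            have : K' = M.subgroupOf M := subgroupOf_eq_of_map_eq hmod.symm
            rw [this, Subgroup.subgroupOf_self]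
        calc (frattini ↥M).map M.subtype
            ≤ ((M₁ ⊓ M).subgroupOf M).map M.subtype :=
              Subgroup.map_mono (frattini_le_coatom hco)
          _ = (M₁ ⊓ M) ⊓ M := Subgroup.subgroupOf_map_subtype _ _
          _ ≤ M₁ := le_trans inf_le_left inf_le_left
  -- Step B1
  have hB1 : (frattini (G ⧸ P)).comap φ ≤ (frattini ↥M).map M.subtype ⊔ P := by
    intro t ht
    have htT : t ∈ ((M : Set G) * (P : Set G)) := by
      rw [← Subgroup.mul_normal, hMPtop]; trivial
    obtain ⟨m, hm, y, hy, rfl⟩ := htT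
    have hmem : ∀ M' : Subgroup ↥M, IsCoatom M' → m ∈ M'.map M.subtype := by
      intro M' hM'
      set Q := M'.map M.subtype with hQdef
      have hQM : Q ≤ M := Subgroup.map_subtype_le M'
      have hQne : Q ≠ M := by
        intro h
        apply hM'.1
        have := subgroupOf_eq_of_map_eq h
        rwa [Subgroup.subgroupOf_self] at this
      have hcoQP : IsCoatom (Q ⊔ P) := by
        constructor
        · intro h
          apply hQne
          have hmod : (Q ⊔ P) ⊓ M = Q ⊔ (P ⊓ M) := modular hPn hQM
          rw [h, top_inf_eq, hPMbot, sup_bot_eq] at hmod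
          exact hmod.symm
        · intro K hK
          have hPK : P ≤ K := le_trans le_sup_right hK.le
          have hKdec : K = (K ⊓ M) ⊔ P := sup_decomp hPn hPK hMPtop
          rcases sandwich hM' (le_inf (le_trans le_sup_left hK.le) hQM)
              (inf_le_right : K ⊓ M ≤ M) with h | h
          · exact absurd (by rw [hKdec, h]) hK.ne'
          · rw [hKdec, h, hMPtop]
      have hcoatomQ : IsCoatom ((Q ⊔ P).map φ) :=
        isCoatom_map_of_ker_le hs hcoQP (by rw [hkerφ]; exact le_sup_right)
      have h1 : φ (m * y) ∈ (Q ⊔ P).map φ := frattini_le_coatom hcoatomQ ht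
      have h2 : m * y ∈ Q ⊔ P := by
        have h2' : m * y ∈ ((Q ⊔ P).map φ).comap φ := h1
        rwa [Subgroup.comap_map_eq, hkerφ,
          sup_eq_left.mpr (le_sup_right : P ≤ Q ⊔ P)] at h2'
      have h3 : m ∈ Q ⊔ P := by
        have hme : m = (m * y) * y⁻¹ := by group
        rw [hme]
        exact mul_mem h2 (inv_mem (le_sup_right (α := Subgroup G) hy))
      have h4 : m ∈ (Q ⊔ P) ⊓ M := ⟨h3, hm⟩
      rwa [modular hPn hQM, hPMbot, sup_bot_eq] at h4
    refine mul_mem (le_sup_left (α := Subgroup G) ?_) (le_sup_right (α := Subgroup G) hy)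
    have hfr : frattini ↥M = ⨅ M' ∈ {H : Subgroup ↥M | IsCoatom H}, M' := rfl
    have hmm : (⟨m, hm⟩ : ↥M) ∈ frattini ↥M := by
      rw [hfr]
      refine Subgroup.mem_iInf.mpr fun M' => Subgroup.mem_iInf.mpr fun hM' => ?_
      obtain ⟨m', hm', he⟩ := hmem M' hM'
      have hsub : m' = (⟨m, hm⟩ : ↥M) := Subtype.ext he
      rwa [← hsub]
    exact ⟨⟨m, hm⟩, hmm, rfl⟩
  -- combine
  unfold Good
  refine le_antisymm ?_
    (Subgroup.map_le_iff_le_comap.mpr (frattini_le_comap_frattini_of_surjective hs))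
  calc frattini (G ⧸ P)
      = ((frattini (G ⧸ P)).comap φ).map φ :=
        (Subgroup.map_comap_eq_self_of_surjective hs _).symm
    _ ≤ ((frattini ↥M).map M.subtype ⊔ P).map φ := Subgroup.map_mono hB1
    _ ≤ (frattini G ⊔ P).map φ := Subgroup.map_mono (sup_le_sup_right hB2 P)
    _ = (frattini G).map φ ⊔ P.map φ := Subgroup.map_sup _ _ _
    _ = (frattini G).map φ := by
        rw [(Subgroup.map_eq_bot_iff P).mpr hkerφ.ge, sup_bot_eq]


lemma good_mk'_central (n : ℕ) : ∀ (G : Type u) [Group G] [Finite G] (N : Subgroup G)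
    [N.Normal], N ≤ center G → Nat.card N ≤ n → Good (QuotientGroup.mk' N) := by
  induction n with
  | zero =>
    intro G _ _ N _ _ hcard
    exact absurd hcard (by have := Nat.card_pos (α := N); omega)
  | succ n ih =>
    intro G _ _ N _ hNc hcard
    by_cases hbot : N = ⊥
    · subst hbot
      apply good_of_ker_le_frattini (QuotientGroup.mk'_surjective _)
      rw [QuotientGroup.ker_mk']
      exact bot_le
    · rw [Subgroup.eq_bot_iff_forall] at hbot
      push_neg at hbot
      obtain ⟨x, hxN, hx1⟩ := hbot
      have hd1 : orderOf x ≠ 1 := fun h => hx1 (orderOf_eq_one_iff.mp h)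
      have hd0 : orderOf x ≠ 0 := (orderOf_pos x).ne'
      have pp : (orderOf x).minFac.Prime := Nat.minFac_prime hd1
      set y := x ^ (orderOf x / (orderOf x).minFac) with hydef
      have hyord : orderOf y = (orderOf x).minFac := by
        rw [hydef, orderOf_pow,
          Nat.gcd_eq_right (Nat.div_dvd_of_dvd (orderOf x).minFac_dvd)]
        exact Nat.div_div_self (orderOf x).minFac_dvd hd0
      have hyN : y ∈ N := pow_mem hxN _
      have hy1 : y ≠ 1 := fun h => pp.one_lt.ne' (by rw [← hyord, h, orderOf_one])
      set P := Subgroup.zpowers y with hPdef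
      have hPN : P ≤ N := Subgroup.zpowers_le.mpr hyN
      have hPc : P ≤ center G := hPN.trans hNc
      haveI hPn : P.Normal := normal_of_le_center hPc
      have hPcard : Nat.card P = (orderOf x).minFac := by rw [hPdef, Nat.card_zpowers, hyord]
      set φ := QuotientGroup.mk' P with hφdef
      have hφs : Surjective φ := QuotientGroup.mk'_surjective P
      have hgoodP : Good φ := by
        by_cases hPf : P ≤ frattini G
        · exact good_of_ker_le_frattini hφs (by rw [hφdef, QuotientGroup.ker_mk']; exact hPf)
        · exact good_mk'_prime_central pp P hPc hPcard hPf
      set N' := N.map φ with hN'def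
      have hN'c : N' ≤ center (G ⧸ P) := by
        rintro _ ⟨a, ha, rfl⟩
        rw [Subgroup.mem_center_iff]
        intro g'
        obtain ⟨g, rfl⟩ := hφs g'
        show φ g * φ a = φ a * φ g
        rw [← map_mul, ← map_mul, Subgroup.mem_center_iff.mp (hNc ha) g]
      haveI : N'.Normal := normal_of_le_center hN'c
      have hcard' : Nat.card N' ≤ n := by
        set ψ : ↥N →* ↥N' := φ.subgroupMap N with hψdef
        have hψs : Surjective ψ := φ.subgroupMap_surjective N
        have hkermem : (⟨y, hyN⟩ : ↥N) ∈ ψ.ker := by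
          rw [MonoidHom.mem_ker]
          apply Subtype.ext
          show φ y = 1
          exact (QuotientGroup.eq_one_iff y).mpr (Subgroup.mem_zpowers y)
        have hker_ne : ψ.ker ≠ ⊥ := by
          intro h
          rw [h, Subgroup.mem_bot] at hkermem
          exact hy1 (congrArg Subtype.val hkermem)
        have h2 : 1 < Nat.card ψ.ker := (Subgroup.one_lt_card_iff_ne_bot _).mpr hker_ne
        have hprod : Nat.card ↥N = Nat.card (↥N ⧸ ψ.ker) * Nat.card ψ.ker :=
          Subgroup.card_eq_card_quotient_mul_card_subgroup _
        have hquot : Nat.card (↥N ⧸ ψ.ker) = Nat.card ↥N' :=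
          Nat.card_congr (QuotientGroup.quotientKerEquivOfSurjective ψ hψs).toEquiv
        have hpos : 0 < Nat.card ↥N' := Nat.card_pos
        rw [hquot] at hprod
        have : Nat.card ↥N' * 2 ≤ Nat.card ↥N' * Nat.card ψ.ker :=
          Nat.mul_le_mul_left _ h2
        omega
      have hgoodN' : Good (QuotientGroup.mk' N') := ih (G ⧸ P) N' hN'c hcard'
      have hcomp : Good ((QuotientGroup.mk' N').comp φ) := good_comp hgoodP hgoodN'
      have hcs : Surjective ⇑((QuotientGroup.mk' N').comp φ) := fun z => by
        obtain ⟨b, rfl⟩ := QuotientGroup.mk'_surjective N' z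
        obtain ⟨a, rfl⟩ := hφs b
        exact ⟨a, rfl⟩
      refine good_of_ker_eq _ hcs N ?_ hcomp
      rw [← MonoidHom.comap_ker, QuotientGroup.ker_mk', hN'def, Subgroup.comap_map_eq,
        hφdef, QuotientGroup.ker_mk', sup_eq_left.mpr hPN]

lemma main_step {G₁ : Type u} [Group G₁] [Finite G₁] (φ : G →* G₁) (hs : Surjective φ)
    (hgood : Good φ) (H : Subgroup G) [H.Normal] (hker : φ.ker ≤ H)
    (hcent : H.map φ ≤ center G₁) : Good (QuotientGroup.mk' H) := by
  haveI : (H.map φ).Normal := normal_of_le_center hcent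
  have h1 : Good (QuotientGroup.mk' (H.map φ)) :=
    good_mk'_central (Nat.card (H.map φ)) G₁ (H.map φ) hcent le_rfl
  have hcomp := good_comp hgood h1
  have hcs : Surjective ⇑((QuotientGroup.mk' (H.map φ)).comp φ) := fun z => by
    obtain ⟨b, rfl⟩ := QuotientGroup.mk'_surjective (H.map φ) z
    obtain ⟨a, rfl⟩ := hs b
    exact ⟨a, rfl⟩
  refine good_of_ker_eq _ hcs H ?_ hcomp
  rw [← MonoidHom.comap_ker, QuotientGroup.ker_mk', Subgroup.comap_map_eq,
    sup_eq_left.mpr hker]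


end Fin

end Stmt13Aux
/-- For the ascending series `S 0 = 1`, `S (i+1) / S i = Soc(Z(G / S i))`, every
normal subgroup `H` of `G` with `S j ≤ H ≤ S (j+1)` satisfies `Φ(G/H) = Φ(G)H/H`. -/
theorem stmt_13 (G : Type*) [Group G] [Finite G] (S : ℕ → Subgroup G)
    (hnorm : ∀ i, (S i).Normal) (h0 : S 0 = ⊥)
    (hstep : ∀ i, S i ≤ S (i + 1) ∧
      (letI := hnorm i;
        (S (i + 1)).map (QuotientGroup.mk' (S i)) = centerSocle (G ⧸ S i)))
    (j : ℕ) (H : Subgroup G) [H.Normal] (h1 : S j ≤ H) (h2 : H ≤ S (j + 1)) :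
    frattini (G ⧸ H) = (frattini G).map (QuotientGroup.mk' H) := by
  have key : ∀ j : ℕ, (letI := hnorm j; Stmt13Aux.Good (QuotientGroup.mk' (S j))) := by
    intro j
    induction j with
    | zero =>
      letI := hnorm 0
      apply Stmt13Aux.good_of_ker_le_frattini (QuotientGroup.mk'_surjective _)
      rw [QuotientGroup.ker_mk', h0]
      exact bot_le
    | succ j ihj =>
      letI := hnorm j
      letI := hnorm (j + 1)
      refine Stmt13Aux.main_step (QuotientGroup.mk' (S j)) (QuotientGroup.mk'_surjective _) ihj
        (S (j + 1)) (by rw [QuotientGroup.ker_mk']; exact (hstep j).1) ?_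
      rw [(hstep j).2]
      exact Subgroup.map_subtype_le _
  letI := hnorm j
  have hfin : Stmt13Aux.Good (QuotientGroup.mk' H) := by
    refine Stmt13Aux.main_step (QuotientGroup.mk' (S j)) (QuotientGroup.mk'_surjective _) (key j) H
      (by rw [QuotientGroup.ker_mk']; exact h1) ?_
    refine le_trans (Subgroup.map_mono h2) ?_
    rw [(hstep j).2]
    exact Subgroup.map_subtype_le _
  exact hfin
end

section
/- The class B of finite groups G such that Φ(G/N) = 1 for every normal subgroup N of G is a formation: it is closed under quotients, and if M, N ⊴ G with M ∩ N = 1 and both G/M and G/N belong to B, then G belongs to B. -/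
open Subgroup

section Helpers

variable {G : Type*} {H : Type*} [Group G] [Group H]

lemma frattini_eq_bot_of_mulEquiv (e : G ≃* H) (h : frattini G = ⊥) : frattini H = ⊥ := by
  have h1 := frattini_le_comap_frattini_of_surjective
    (φ := e.symm.toMonoidHom) e.symm.surjective
  rw [h] at h1
  rw [← le_bot_iff]
  intro x hx
  have := h1 hx
  simp only [Subgroup.mem_comap, Subgroup.mem_bot] at this
  have : e.symm x = 1 := this
  have := congrArg e this
  simpa using this

lemma classB_of_mulEquiv (e : G ≃* H) (h : classB G) : classB H := by
  intro N hN
  haveI : (N.comap e.toMonoidHom).Normal := hN.comap e.toMonoidHom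
  have hmap : (N.comap e.toMonoidHom).map e.toMonoidHom = N :=
    Subgroup.map_comap_eq_self_of_surjective e.surjective N
  have e2 : G ⧸ (N.comap e.toMonoidHom) ≃* H ⧸ N :=
    QuotientGroup.congr _ N e hmap
  exact frattini_eq_bot_of_mulEquiv e2 (h _)

/-- Part 1: the class `B` is closed under quotients. -/
lemma classB_quotient (h : classB G) (N : Subgroup G) [hN : N.Normal] : classB (G ⧸ N) := by
  intro K hK
  set Kc := K.comap (QuotientGroup.mk' N) with hKc
  haveI : Kc.Normal := hK.comap _
  have hle : N ≤ Kc := by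
    intro x hx
    simp only [hKc, Subgroup.mem_comap]
    have : (QuotientGroup.mk' N) x = 1 := (QuotientGroup.eq_one_iff x).mpr hx
    rw [this]; exact one_mem K
  have hmap : Kc.map (QuotientGroup.mk' N) = K :=
    Subgroup.map_comap_eq_self_of_surjective (QuotientGroup.mk'_surjective N) K
  have e := QuotientGroup.quotientQuotientEquivQuotient N Kc hle
  have e3 := QuotientGroup.quotientMulEquivOfEq hmap
  exact frattini_eq_bot_of_mulEquiv (e.symm.trans e3) (h Kc)

lemma frattini_eq_bot_of_classB (h : classB G) : frattini G = ⊥ := by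
  haveI : (⊥ : Subgroup G).Normal := inferInstance
  exact frattini_eq_bot_of_mulEquiv QuotientGroup.quotientBot (h ⊥)

open scoped commutatorElement in
lemma center_ne_bot_of_nilpotent [Nontrivial G] [hG : Group.IsNilpotent G] :
    Subgroup.center G ≠ ⊥ := by
  intro h
  obtain ⟨n, hn⟩ := hG.nilpotent
  have hall : ∀ m, Subgroup.upperCentralSeries G m = ⊥ := by
    intro m
    induction m with
    | zero => exact Subgroup.upperCentralSeries_zero G
    | succ m ihm =>
      rw [← le_bot_iff]
      intro x hx
      rw [Subgroup.mem_upperCentralSeries_succ_iff] at hx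
      have hc : x ∈ Subgroup.center G := by
        rw [Subgroup.mem_center_iff]
        intro g
        have := hx g
        rw [ihm, Subgroup.mem_bot] at this
        have h1 : ⁅x, g⁆ = 1 := by rw [commutatorElement_def]; exact this
        exact ((commutatorElement_eq_one_iff_commute.mp h1).symm).eq
      rw [h] at hc
      exact hc
  rw [hall n] at hn
  exact bot_ne_top hn

lemma exists_mul_of_mem_sup (A U : Subgroup G) [A.Normal] {g : G} (hg : g ∈ A ⊔ U) :
    ∃ a ∈ A, ∃ u ∈ U, g = a * u := by
  have h1 : g ∈ (↑(A ⊔ U) : Set G) := hg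
  rw [Subgroup.normal_mul] at h1
  rw [Set.mem_mul] at h1
  obtain ⟨a, ha, u, hu, h⟩ := h1
  exact ⟨a, ha, u, hu, h.symm⟩

end Helpers

section Main

theorem classB_of_subdirect :
    ∀ (n : ℕ) (G : Type) [Group G] [Finite G], Nat.card G ≤ n →
      ∀ (M N : Subgroup G) [M.Normal] [N.Normal], M ⊓ N = ⊥ →
        classB (G ⧸ M) → classB (G ⧸ N) → classB G := by
  intro n
  induction n using Nat.strong_induction_on with
  | _ n ih =>
    intro G _ _ hcard M N hM hN hMN hBM hBN
    by_cases hMbot : M = ⊥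
    · subst hMbot
      exact classB_of_mulEquiv QuotientGroup.quotientBot hBM
    -- Choose a minimal normal subgroup `A` of `G` inside `M`.
    have hfin : Finite (Subgroup G) :=
      Finite.of_injective (fun H => (H : Set G)) SetLike.coe_injective
    obtain ⟨A, hAS, hAmin'⟩ : ∃ A ∈ {B : Subgroup G | B.Normal ∧ B ≠ ⊥ ∧ B ≤ M},
        ∀ B ∈ {B : Subgroup G | B.Normal ∧ B ≠ ⊥ ∧ B ≤ M}, B ≤ A → A = B := by
      haveI := hfin
      obtain ⟨A, hA⟩ := exists_minimal_of_wellFoundedLT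
        (· ∈ {B : Subgroup G | B.Normal ∧ B ≠ ⊥ ∧ B ≤ M}) ⟨M, hM, hMbot, le_rfl⟩
      exact ⟨A, hA.1, fun B hB hBA => le_antisymm (hA.2 hB hBA) hBA⟩
    obtain ⟨hAnormal, hAne, hAM⟩ := hAS
    haveI := hAnormal
    have hAmin : ∀ B : Subgroup G, B.Normal → B ≤ A → B ≠ ⊥ → B = A := by
      intro B hB hBA hBne
      exact (hAmin' B ⟨hB, hBne, hBA.trans hAM⟩ hBA).symm
    -- `G ⧸ A` is in the class `B`, by induction.
    have hcardq : Nat.card (G ⧸ A) < n := by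
      have h1 : Nat.card G = Nat.card (G ⧸ A) * Nat.card A :=
        Subgroup.card_eq_card_quotient_mul_card_subgroup A
      have h2 : 0 < Nat.card (G ⧸ A) := Nat.card_pos
      have h3 : 1 < Nat.card A := A.one_lt_card_iff_ne_bot.mpr hAne
      calc Nat.card (G ⧸ A) < Nat.card (G ⧸ A) * Nat.card A :=
            (lt_mul_iff_one_lt_right h2).mpr h3
        _ = Nat.card G := h1.symm
        _ ≤ n := hcard
    have hπ : Function.Surjective (QuotientGroup.mk' A) := QuotientGroup.mk'_surjective A
    haveI hMmapn : ((M.map (QuotientGroup.mk' A))).Normal := hM.map _ hπ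
    haveI hNmapn : ((N.map (QuotientGroup.mk' A))).Normal := hN.map _ hπ
    have hBA : classB (G ⧸ A) := by
      refine ih (Nat.card (G ⧸ A)) hcardq (G ⧸ A) le_rfl
        (M.map (QuotientGroup.mk' A)) (N.map (QuotientGroup.mk' A)) ?_ ?_ ?_
      · -- trivial intersection
        rw [eq_bot_iff]
        rintro x ⟨hxM, hxN⟩
        obtain ⟨m, hm, hmx⟩ := hxM
        obtain ⟨w, hw, hwx⟩ := hxN
        have hmw : m⁻¹ * w ∈ A := by
          apply (QuotientGroup.eq_one_iff _).mp
          have : (QuotientGroup.mk' A) (m⁻¹ * w) = 1 := by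
            rw [map_mul, map_inv, hmx, hwx]
            simp
          simpa using this
        have hwM : w ∈ M := by
          have : m * (m⁻¹ * w) ∈ M := mul_mem hm (hAM hmw)
          simpa using this
        have : w ∈ M ⊓ N := ⟨hwM, hw⟩
        rw [hMN, Subgroup.mem_bot] at this
        rw [Subgroup.mem_bot, ← hwx, this, map_one]
      · -- classB ((G⧸A) ⧸ M.map π)
        exact classB_of_mulEquiv
          (QuotientGroup.quotientQuotientEquivQuotient A M hAM).symm hBM
      · -- classB ((G⧸A) ⧸ N.map π)
        haveI : (N ⊔ A).Normal := Subgroup.sup_normal N A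
        have hmapsup : (N ⊔ A).map (QuotientGroup.mk' A) = N.map (QuotientGroup.mk' A) := by
          rw [Subgroup.map_sup, QuotientGroup.map_mk'_self, sup_bot_eq]
        haveI : ((N ⊔ A).map (QuotientGroup.mk' N)).Normal :=
          (inferInstance : (N ⊔ A).Normal).map _ (QuotientGroup.mk'_surjective N)
        have hBsup : classB (G ⧸ (N ⊔ A)) :=
          classB_of_mulEquiv (QuotientGroup.quotientQuotientEquivQuotient N (N ⊔ A) le_sup_left)
            (classB_quotient hBN _)
        haveI : ((N ⊔ A).map (QuotientGroup.mk' A)).Normal :=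
          (inferInstance : (N ⊔ A).Normal).map _ hπ
        have h5 : classB ((G ⧸ A) ⧸ (N ⊔ A).map (QuotientGroup.mk' A)) :=
          classB_of_mulEquiv
            (QuotientGroup.quotientQuotientEquivQuotient A (N ⊔ A) le_sup_right).symm hBsup
        exact classB_of_mulEquiv (QuotientGroup.quotientMulEquivOfEq hmapsup) h5
    -- Now prove `classB G`.
    intro K hK
    haveI := hK
    by_cases hAK : A ≤ K
    · haveI : ((K.map (QuotientGroup.mk' A))).Normal := hK.map _ hπ
      exact frattini_eq_bot_of_mulEquiv
        (QuotientGroup.quotientQuotientEquivQuotient A K hAK) (hBA _)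
    · by_contra hPhi
      have hAKbot : A ⊓ K = ⊥ := by
        by_contra hne
        haveI : (A ⊓ K).Normal := Subgroup.normal_inf_normal A K
        have := hAmin (A ⊓ K) inferInstance inf_le_left hne
        exact hAK (this ▸ inf_le_right)
      have hq : Function.Surjective (QuotientGroup.mk' K) := QuotientGroup.mk'_surjective K
      haveI : (K ⊔ A).Normal := Subgroup.sup_normal K A
      have hBKA : frattini (G ⧸ (K ⊔ A)) = ⊥ := by
        haveI : ((K ⊔ A).map (QuotientGroup.mk' A)).Normal :=
          (inferInstance : (K ⊔ A).Normal).map _ hπ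
        exact frattini_eq_bot_of_mulEquiv
          (QuotientGroup.quotientQuotientEquivQuotient A (K ⊔ A) le_sup_right) (hBA _)
      -- f1 : frattini (G ⧸ K) ≤ A.map (mk' K)
      have hconn : ∀ g : G, g ∈ K ⊔ A → (QuotientGroup.mk' K) g ∈ A.map (QuotientGroup.mk' K) := by
        intro g hg
        have hg' : g ∈ A ⊔ K := by rwa [sup_comm] at hg
        obtain ⟨a, ha, k, hk, rfl⟩ := exists_mul_of_mem_sup A K hg'
        have hk1 : (QuotientGroup.mk' K) k = 1 := (QuotientGroup.eq_one_iff k).mpr hk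
        have heq : (QuotientGroup.mk' K) (a * k) = (QuotientGroup.mk' K) a := by
          rw [map_mul, hk1, mul_one]
        rw [heq]
        exact ⟨a, ha, rfl⟩
      have f1 : frattini (G ⧸ K) ≤ A.map (QuotientGroup.mk' K) := by
        have hle : K ≤ (K ⊔ A).comap (MonoidHom.id G) := le_sup_left
        set ρ : G ⧸ K →* G ⧸ (K ⊔ A) := QuotientGroup.map K (K ⊔ A) (MonoidHom.id G) hle with hρdef
        have hρ : Function.Surjective ρ := by
          intro y
          obtain ⟨g, rfl⟩ := QuotientGroup.mk'_surjective (K ⊔ A) y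
          exact ⟨(QuotientGroup.mk' K) g, rfl⟩
        have h2 := frattini_le_comap_frattini_of_surjective hρ
        rw [hBKA] at h2
        intro x hx
        obtain ⟨g, rfl⟩ := hq x
        have hker : ρ ((QuotientGroup.mk' K) g) = 1 := by
          have := h2 hx
          simpa [Subgroup.mem_comap] using this
        have hg : g ∈ K ⊔ A := by
          apply (QuotientGroup.eq_one_iff g).mp
          exact hker
        exact hconn g hg
      -- f2 : frattini (G ⧸ K) = A.map (mk' K)
      have f2 : frattini (G ⧸ K) = A.map (QuotientGroup.mk' K) := by
        have hAT : A ≤ (frattini (G ⧸ K)).comap (QuotientGroup.mk' K) := by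
          by_contra hAT
          have hbot : A ⊓ (frattini (G ⧸ K)).comap (QuotientGroup.mk' K) = ⊥ := by
            by_contra hne
            haveI : ((frattini (G ⧸ K)).comap (QuotientGroup.mk' K)).Normal :=
              Subgroup.Normal.comap inferInstance _
            haveI : (A ⊓ (frattini (G ⧸ K)).comap (QuotientGroup.mk' K)).Normal :=
              Subgroup.normal_inf_normal _ _
            have := hAmin _ inferInstance inf_le_left hne
            exact hAT (this ▸ inf_le_right)
          apply hPhi
          rw [eq_bot_iff]
          intro x hx
          obtain ⟨a, ha, rfl⟩ := f1 hx
          have haT : a ∈ (frattini (G ⧸ K)).comap (QuotientGroup.mk' K) :=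
            Subgroup.mem_comap.mpr hx
          have : a ∈ A ⊓ (frattini (G ⧸ K)).comap (QuotientGroup.mk' K) := ⟨ha, haT⟩
          rw [hbot, Subgroup.mem_bot] at this
          rw [Subgroup.mem_bot, this, map_one]
        refine le_antisymm f1 ?_
        calc A.map (QuotientGroup.mk' K)
            ≤ ((frattini (G ⧸ K)).comap (QuotientGroup.mk' K)).map (QuotientGroup.mk' K) :=
              Subgroup.map_mono hAT
          _ = frattini (G ⧸ K) := Subgroup.map_comap_eq_self_of_surjective hq _
      -- f3 : elements of A commute
      have hAcomm : ∀ x ∈ A, ∀ y ∈ A, x * y = y * x := by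
        set φ := (QuotientGroup.mk' K).comp A.subtype with hφdef
        have hφinj : Function.Injective φ := by
          rw [← MonoidHom.ker_eq_bot_iff, eq_bot_iff]
          intro a ha
          have h1 : (a : G) ∈ K := by
            apply (QuotientGroup.eq_one_iff (a : G)).mp
            exact ha
          have h2 : (a : G) ∈ A ⊓ K := ⟨a.2, h1⟩
          rw [hAKbot, Subgroup.mem_bot] at h2
          rw [Subgroup.mem_bot]
          exact Subtype.ext h2
        have hφrange : φ.range = A.map (QuotientGroup.mk' K) := by
          rw [hφdef, MonoidHom.range_comp, Subgroup.range_subtype]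
        haveI hnilb : Group.IsNilpotent (A.map (QuotientGroup.mk' K)) := by
          have hnil := frattini_nilpotent (G := G ⧸ K)
          rw [f2] at hnil
          exact hnil
        haveI hnilA : Group.IsNilpotent A := by
          have e : (A.map (QuotientGroup.mk' K)) ≃* A :=
            ((MulEquiv.subgroupCongr hφrange.symm).trans
              (MulEquiv.ofBijective (φ.rangeRestrict) ?_).symm)
          · exact nilpotent_of_mulEquiv e
          · constructor
            · intro x y hxy
              apply hφinj
              have := congrArg Subtype.val hxy
              exact this
            · exact φ.rangeRestrict_surjective
        haveI : Nontrivial A := A.nontrivial_iff_ne_bot.mpr hAne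
        have hZc : Subgroup.center A ≠ ⊥ := center_ne_bot_of_nilpotent
        have hZnormal : (A ⊓ Subgroup.centralizer (A : Set G)).Normal := by
          constructor
          intro z hz g
          have hzA : z ∈ A := hz.1
          have hzc : z ∈ Subgroup.centralizer (A : Set G) := hz.2
          refine ⟨hAnormal.conj_mem z hzA g, Subgroup.mem_centralizer_iff.mpr ?_⟩
          intro h hh
          have hb : g⁻¹ * h * g ∈ A := by
            have := hAnormal.conj_mem h hh g⁻¹
            simpa [mul_assoc] using this
          have hcomm := (Subgroup.mem_centralizer_iff.mp hzc) _ hb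
          calc h * (g * z * g⁻¹) = g * (g⁻¹ * h * g * z) * g⁻¹ := by group
            _ = g * (z * (g⁻¹ * h * g)) * g⁻¹ := by rw [hcomm]
            _ = g * z * g⁻¹ * h := by group
        have hZne : A ⊓ Subgroup.centralizer (A : Set G) ≠ ⊥ := by
          intro hbot
          apply hZc
          rw [eq_bot_iff]
          intro c hc
          have hcZ : (c : G) ∈ A ⊓ Subgroup.centralizer (A : Set G) := by
            refine ⟨c.2, Subgroup.mem_centralizer_iff.mpr ?_⟩
            intro h hh
            have := Subgroup.mem_center_iff.mp hc ⟨h, hh⟩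
            exact congrArg Subtype.val this
          rw [hbot, Subgroup.mem_bot] at hcZ
          rw [Subgroup.mem_bot]
          exact Subtype.ext hcZ
        have hZA : A ⊓ Subgroup.centralizer (A : Set G) = A :=
          hAmin _ hZnormal inf_le_left hZne
        intro x hx y hy
        have hyZ : y ∈ A ⊓ Subgroup.centralizer (A : Set G) := by rw [hZA]; exact hy
        exact (Subgroup.mem_centralizer_iff.mp hyZ.2) x hx
      -- f4 : a maximal subgroup U avoiding A
      have hfratN : frattini G ≤ N := by
        have h2 := frattini_le_comap_frattini_of_surjective (QuotientGroup.mk'_surjective N)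
        rw [frattini_eq_bot_of_classB hBN] at h2
        intro x hx
        have h3 := h2 hx
        rw [Subgroup.mem_comap, Subgroup.mem_bot] at h3
        exact (QuotientGroup.eq_one_iff x).mp h3
      have hAF : ¬ A ≤ frattini G := by
        intro hle
        have : A ≤ M ⊓ N := le_inf hAM (hle.trans hfratN)
        rw [hMN] at this
        exact hAne (le_bot_iff.mp this)
      obtain ⟨U, hUco, hAU⟩ : ∃ U : Subgroup G, IsCoatom U ∧ ¬ A ≤ U := by
        by_contra hcon
        push_neg at hcon
        apply hAF
        show A ≤ Order.radical (Subgroup G)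
        unfold Order.radical
        simp only [le_iInf_iff]
        intro U hU
        exact hcon U hU
      have hUAtop : A ⊔ U = ⊤ := by
        apply hUco.2
        apply lt_of_le_of_ne le_sup_right
        intro heq
        exact hAU (heq ▸ le_sup_left)
      have hUAnormal : (U ⊓ A).Normal := by
        constructor
        intro x hx g
        have hxU : x ∈ U := hx.1
        have hxA : x ∈ A := hx.2
        have hg : g ∈ A ⊔ U := by rw [hUAtop]; trivial
        obtain ⟨a, ha, u, hu, rfl⟩ := exists_mul_of_mem_sup A U hg
        have hy : u * x * u⁻¹ ∈ U ⊓ A :=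
          Subgroup.mem_inf.mpr
            ⟨mul_mem (mul_mem hu hxU) (inv_mem hu), hAnormal.conj_mem x hxA u⟩
        have hyA : u * x * u⁻¹ ∈ A := (Subgroup.mem_inf.mp hy).2
        have hcomm := hAcomm a ha (u * x * u⁻¹) hyA
        have hconj : a * u * x * (a * u)⁻¹ = u * x * u⁻¹ := by
          calc a * u * x * (a * u)⁻¹ = a * (u * x * u⁻¹) * a⁻¹ := by group
            _ = u * x * u⁻¹ * a * a⁻¹ := by rw [hcomm]
            _ = u * x * u⁻¹ := by group
        rw [hconj]
        exact hy
      have hUAbot : U ⊓ A = ⊥ := by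
        by_contra hne
        have := hAmin (U ⊓ A) hUAnormal inf_le_right hne
        exact hAU (this ▸ inf_le_left)
      -- f8 : U is in the class B, being isomorphic to G ⧸ A
      have hBU : classB U := by
        set ψ := (QuotientGroup.mk' A).comp U.subtype with hψdef
        have hψinj : Function.Injective ψ := by
          rw [← MonoidHom.ker_eq_bot_iff, eq_bot_iff]
          intro u hu
          have h1 : (u : G) ∈ A := by
            apply (QuotientGroup.eq_one_iff (u : G)).mp
            exact hu
          have h2 : (u : G) ∈ U ⊓ A := ⟨u.2, h1⟩
          rw [hUAbot, Subgroup.mem_bot] at h2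
          rw [Subgroup.mem_bot]
          exact Subtype.ext h2
        have hψsurj : Function.Surjective ψ := by
          intro y
          obtain ⟨g, rfl⟩ := hπ y
          have hg : g ∈ A ⊔ U := by rw [hUAtop]; trivial
          obtain ⟨a, ha, u, hu, rfl⟩ := exists_mul_of_mem_sup A U hg
          refine ⟨⟨u, hu⟩, ?_⟩
          have ha1 : (QuotientGroup.mk' A) a = 1 := (QuotientGroup.eq_one_iff a).mpr ha
          show (QuotientGroup.mk' A) u = (QuotientGroup.mk' A) (a * u)
          rw [map_mul, ha1, one_mul]
        exact classB_of_mulEquiv (MulEquiv.ofBijective ψ ⟨hψinj, hψsurj⟩).symm hBA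
      by_cases hKU : K ≤ U
      · -- Then U/K is maximal in G/K, contains the Frattini subgroup = image of A, so A ≤ U.
        have hUbco : IsCoatom (U.map (QuotientGroup.mk' K)) := by
          constructor
          · intro htop
            apply hUco.1
            rw [eq_top_iff]
            intro g _
            have hg : (QuotientGroup.mk' K) g ∈ U.map (QuotientGroup.mk' K) := by
              rw [htop]; trivial
            obtain ⟨u, hu, huq⟩ := hg
            have hk : u⁻¹ * g ∈ K := by
              apply (QuotientGroup.eq_one_iff _).mp
              show (QuotientGroup.mk' K) (u⁻¹ * g) = 1
              rw [map_mul, map_inv, huq]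
              simp
            have : g = u * (u⁻¹ * g) := by group
            rw [this]
            exact mul_mem hu (hKU hk)
          · intro X hX
            have hUle : U ≤ X.comap (QuotientGroup.mk' K) := by
              intro u hu
              exact Subgroup.mem_comap.mpr (le_of_lt hX ⟨u, hu, rfl⟩)
            have hne2 : X.comap (QuotientGroup.mk' K) ≠ U := by
              intro heq
              have : X = U.map (QuotientGroup.mk' K) := by
                rw [← Subgroup.map_comap_eq_self_of_surjective hq X, heq]
              exact hX.ne' this
            have htop : X.comap (QuotientGroup.mk' K) = ⊤ :=
              hUco.2 _ (lt_of_le_of_ne hUle (Ne.symm hne2))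
            calc X = (X.comap (QuotientGroup.mk' K)).map (QuotientGroup.mk' K) :=
                  (Subgroup.map_comap_eq_self_of_surjective hq X).symm
              _ = (⊤ : Subgroup G).map (QuotientGroup.mk' K) := by rw [htop]
              _ = ⊤ := Subgroup.map_top_of_surjective _ hq
        have hfle : frattini (G ⧸ K) ≤ U.map (QuotientGroup.mk' K) := frattini_le_coatom hUbco
        apply hAU
        intro a ha
        have hmem : (QuotientGroup.mk' K) a ∈ U.map (QuotientGroup.mk' K) :=
          hfle (f2 ▸ (⟨a, ha, rfl⟩ : (QuotientGroup.mk' K) a ∈ A.map (QuotientGroup.mk' K)))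
        obtain ⟨u, hu, huq⟩ := hmem
        have hk : u⁻¹ * a ∈ K := by
          apply (QuotientGroup.eq_one_iff _).mp
          show (QuotientGroup.mk' K) (u⁻¹ * a) = 1
          rw [map_mul, map_inv, huq]
          simp
        have : a = u * (u⁻¹ * a) := by group
        rw [this]
        exact mul_mem hu (hKU hk)
      · -- K ⊔ U = ⊤, so G/K is a quotient of U, hence Frattini-free.
        have hKUtop : K ⊔ U = ⊤ := by
          apply hUco.2
          apply lt_of_le_of_ne le_sup_right
          intro heq
          exact hKU (heq ▸ le_sup_left)
        set χ := (QuotientGroup.mk' K).comp U.subtype with hχdef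
        have hχsurj : Function.Surjective χ := by
          intro y
          obtain ⟨g, rfl⟩ := hq y
          have hg : g ∈ K ⊔ U := by rw [hKUtop]; trivial
          obtain ⟨k, hk, u, hu, rfl⟩ := exists_mul_of_mem_sup K U hg
          refine ⟨⟨u, hu⟩, ?_⟩
          have hk1 : (QuotientGroup.mk' K) k = 1 := (QuotientGroup.eq_one_iff k).mpr hk
          show (QuotientGroup.mk' K) u = (QuotientGroup.mk' K) (k * u)
          rw [map_mul, hk1, one_mul]
        exact hPhi (frattini_eq_bot_of_mulEquiv
          (QuotientGroup.quotientKerEquivOfSurjective χ hχsurj) (hBU (MonoidHom.ker χ)))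

end Main

/-- The class `B` is a formation: it is closed under quotients, and under subdirect
products (if `M ⊓ N = 1` and `G/M, G/N ∈ B` then `G ∈ B`). -/
theorem stmt_15 :
    (∀ (G : Type) [Group G] [Finite G] (N : Subgroup G) [N.Normal],
        classB G → classB (G ⧸ N)) ∧
      (∀ (G : Type) [Group G] [Finite G] (M N : Subgroup G) [M.Normal] [N.Normal],
        M ⊓ N = ⊥ → classB (G ⧸ M) → classB (G ⧸ N) → classB G) := by
  constructor
  · intro G _ _ N _ h
    exact classB_quotient h N
  · intro G _ _ M N _ _ h1 h2 h3
    exact classB_of_subdirect (Nat.card G) G le_rfl M N h1 h2 h3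
end
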